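/- arXiv:2604.14081 — 17 statements merged into one kernel-verified Lean document; each statement's English description precedes it below -/
import Mathlib

section
/- Let 1 ≤ q < n be integers and set N = 2^n, K = 2^q, M = 2^{n-q}. Work in ℂ^N with standard basis indexed by pairs (u,v) ∈ Fin K × Fin M; for u ∈ Fin K the block u is {(u,v) : v ∈ Fin M}. Let φ be the uniform superposition (every coordinate 1/√N), fix a target (t*,t'), let U flip the sign of the coordinate at (t*,t') and fix all other basis vectors, let D ψ = 2⟨φ,ψ⟩φ − ψ, and let G = D ∘ U. Set λ = arcsin(1/√N) and λ' = arcsin(1/√M). For natural numbers j₁, j₂ define g_t = sin((2j₁+1)λ)·cos(2j₂λ') + (√(M−1)/√(N−1))·cos((2j₁+1)λ)·sin(2j₂λ') and b_t = −sin((2j₁+1)λ)·sin(2j₂λ') + (√(M−1)/√(N−1))·cos((2j₁+1)λ)·cos(2j₂λ'). Let ψ₂ ∈ ℂ^N be the vector whose coordinate at (t*,t') is g_t, whose coordinate at (t*,v) for v ≠ t' is b_t/√(M−1), and whose coordinate at (u,v) for u ≠ t* is cos((2j₁+1)λ)/√(N−1). If (N/√(N−1))·(1/K − 1/2)·cos((2j₁+1)λ)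 = −g_t + b_t·√(M−1), then every coordinate of G ψ₂ at an index (u,v) with u ≠ t* equals 0. -/
open Real Finset

lemma sum_ite_const' {α : Type*} [Fintype α] [DecidableEq α] (t : α) (x y : ℂ) :
    ∑ a : α, (if a = t then x else y) = x + ((Fintype.card α : ℂ) - 1) * y := by
  have h : ∀ a : α, (if a = t then x else y) = y + (if a = t then x - y else 0) := by
    intro a; by_cases h : a = t <;> simp [h]
  simp only [h, Finset.sum_add_distrib, Finset.sum_const, Finset.sum_ite_eq',
    Finset.mem_univ, if_true, Finset.card_univ, nsmul_eq_mul]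
  ring

/-- Proposition 1 of the paper: cancellation of the non-target blocks in the GRK
quantum partial search algorithm. -/
theorem stmt_0 (n q : ℕ) (hq : 1 ≤ q) (hqn : q < n)
    (N K M : ℕ) (hN : N = 2 ^ n) (hK : K = 2 ^ q) (hM : M = 2 ^ (n - q))
    -- the uniform superposition
    (φ : Fin K × Fin M → ℂ) (hφ : ∀ i, φ i = (1 / Real.sqrt N : ℝ))
    -- the target
    (tstar : Fin K) (t' : Fin M)
    -- the sign-flip oracle
    (U : (Fin K × Fin M → ℂ) → (Fin K × Fin M → ℂ))
    (hU : ∀ ψ i, U ψ i = if i = (tstar, t') then -ψ i else ψ i)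
    -- the diffusion operator D ψ = 2⟨φ,ψ⟩φ − ψ
    (D : (Fin K × Fin M → ℂ) → (Fin K × Fin M → ℂ))
    (hD : ∀ ψ i, D ψ i = 2 * (∑ j, (starRingEnd ℂ) (φ j) * ψ j) * φ i - ψ i)
    -- the Grover iterate
    (G : (Fin K × Fin M → ℂ) → (Fin K × Fin M → ℂ)) (hG : G = D ∘ U)
    -- the angles
    (lam lam' : ℝ)
    (hlam : lam = Real.arcsin (1 / Real.sqrt N))
    (hlam' : lam' = Real.arcsin (1 / Real.sqrt M))
    (j₁ j₂ : ℕ)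
    -- the amplitudes
    (gt bt : ℝ)
    (hgt : gt = Real.sin ((2 * j₁ + 1) * lam) * Real.cos (2 * j₂ * lam') +
        Real.sqrt ((M : ℝ) - 1) / Real.sqrt ((N : ℝ) - 1) *
          Real.cos ((2 * j₁ + 1) * lam) * Real.sin (2 * j₂ * lam'))
    (hbt : bt = -(Real.sin ((2 * j₁ + 1) * lam) * Real.sin (2 * j₂ * lam')) +
        Real.sqrt ((M : ℝ) - 1) / Real.sqrt ((N : ℝ) - 1) *
          Real.cos ((2 * j₁ + 1) * lam) * Real.cos (2 * j₂ * lam'))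
    -- the state ψ₂ before the last global Grover iteration
    (ψ₂ : Fin K × Fin M → ℂ)
    (hψ₂ : ∀ u v, ψ₂ (u, v) =
      if u = tstar then
        (if v = t' then (gt : ℂ) else ((bt / Real.sqrt ((M : ℝ) - 1) : ℝ) : ℂ))
      else ((Real.cos ((2 * j₁ + 1) * lam) / Real.sqrt ((N : ℝ) - 1) : ℝ) : ℂ))
    -- the cancellation condition
    (hcond : (N / Real.sqrt ((N : ℝ) - 1)) * (1 / K - 1 / 2) *
        Real.cos ((2 * j₁ + 1) * lam) = -gt + bt * Real.sqrt ((M : ℝ) - 1)) :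
    ∀ u v, u ≠ tstar → G ψ₂ (u, v) = 0 := by
  intro u v huv
  have hqle := hqn.le
  have hKM : K * M = N := by
    rw [hN, hK, hM, ← pow_add, Nat.add_sub_cancel' hqle]
  have hM2 : 2 ≤ M := by
    rw [hM]
    calc 2 = 2 ^ 1 := (pow_one 2).symm
    _ ≤ 2 ^ (n - q) := Nat.pow_le_pow_right (by norm_num) (by omega)
  have hN2 : 2 ≤ N := by
    rw [hN]
    calc 2 = 2 ^ 1 := (pow_one 2).symm
    _ ≤ 2 ^ n := Nat.pow_le_pow_right (by norm_num) (by omega)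
  have hK1 : 1 ≤ K := by rw [hK]; exact Nat.one_le_two_pow
  -- real abbreviations
  set cθ := Real.cos ((2 * j₁ + 1) * lam) with hcθ
  set sM := Real.sqrt ((M : ℝ) - 1) with hsMdef
  set sN1 := Real.sqrt ((N : ℝ) - 1) with hsN1def
  set sN := Real.sqrt (N : ℝ) with hsNdef
  have hMR : (2 : ℝ) ≤ (M : ℝ) := by exact_mod_cast hM2
  have hNR : (2 : ℝ) ≤ (N : ℝ) := by exact_mod_cast hN2
  have hKR : (1 : ℝ) ≤ (K : ℝ) := by exact_mod_cast hK1
  have hsMpos : 0 < sM := Real.sqrt_pos.mpr (by linarith)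
  have hsN1pos : 0 < sN1 := Real.sqrt_pos.mpr (by linarith)
  have hsNpos : 0 < sN := Real.sqrt_pos.mpr (by linarith)
  have hsMsq : sM ^ 2 = (M : ℝ) - 1 := Real.sq_sqrt (by linarith)
  have hsN1sq : sN1 ^ 2 = (N : ℝ) - 1 := Real.sq_sqrt (by linarith)
  have hsNsq : sN ^ 2 = (N : ℝ) := Real.sq_sqrt (by linarith)
  set c := cθ / sN1 with hc
  set d := bt / sM with hd
  -- sum of ψ₂
  have hblock : ∀ a : Fin K, (∑ b : Fin M, ψ₂ (a, b)) =
      if a = tstar then ((gt : ℂ) + ((M : ℂ) - 1) * (d : ℝ)) else (M : ℂ) * (c : ℝ) := by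
    intro a
    by_cases h : a = tstar
    · simp only [h, if_true]
      have : ∀ b : Fin M, ψ₂ (tstar, b) = if b = t' then (gt : ℂ) else ((d : ℝ) : ℂ) := by
        intro b; rw [hψ₂]; simp [hd]
      rw [Finset.sum_congr rfl fun b _ => this b, sum_ite_const']
      simp [Fintype.card_fin]
    · have : ∀ b : Fin M, ψ₂ (a, b) = ((c : ℝ) : ℂ) := by
        intro b; rw [hψ₂, if_neg h]
      rw [Finset.sum_congr rfl fun b _ => this b, Finset.sum_const, if_neg h]
      simp [Fintype.card_fin, mul_comm]
  have hψsum : (∑ j : Fin K × Fin M, ψ₂ j) =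
      ((gt : ℂ) + ((M : ℂ) - 1) * (d : ℝ)) + ((K : ℂ) - 1) * ((M : ℂ) * (c : ℝ)) := by
    rw [Fintype.sum_prod_type]
    rw [Finset.sum_congr rfl fun a _ => hblock a, sum_ite_const']
    simp [Fintype.card_fin]
  -- sum of U ψ₂
  have hψtt : ψ₂ (tstar, t') = (gt : ℂ) := by rw [hψ₂]; simp
  have hUsum : (∑ j : Fin K × Fin M, U ψ₂ j) =
      (-(gt : ℂ) + ((M : ℂ) - 1) * (d : ℝ)) + ((K : ℂ) - 1) * ((M : ℂ) * (c : ℝ)) := by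
    have h1 : ∀ j : Fin K × Fin M, U ψ₂ j =
        ψ₂ j - (if j = (tstar, t') then 2 * ψ₂ j else 0) := by
      intro j; rw [hU]; by_cases h : j = (tstar, t') <;> simp [h] <;> ring
    rw [Finset.sum_congr rfl fun j _ => h1 j, Finset.sum_sub_distrib,
      Finset.sum_ite_eq' Finset.univ (tstar, t'), if_pos (Finset.mem_univ _), hψsum, hψtt]
    ring
  -- the scalar product
  have hS : (∑ j : Fin K × Fin M, (starRingEnd ℂ) (φ j) * U ψ₂ j) =
      ((1 / sN : ℝ) : ℂ) *
        ((-(gt : ℂ) + ((M : ℂ) - 1) * (d : ℝ)) + ((K : ℂ) - 1) * ((M : ℂ) * (c : ℝ))) := by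
    have h1 : ∀ j : Fin K × Fin M, (starRingEnd ℂ) (φ j) * U ψ₂ j =
        ((1 / sN : ℝ) : ℂ) * U ψ₂ j := by
      intro j; rw [hφ, Complex.conj_ofReal]
    rw [Finset.sum_congr rfl fun j _ => h1 j, ← Finset.mul_sum, hUsum]
-- the value of G ψ₂ at (u, v)
  have hval : ψ₂ (u, v) = ((c : ℝ) : ℂ) := by rw [hψ₂, if_neg huv]
  have hUval : U ψ₂ (u, v) = ((c : ℝ) : ℂ) := by
    rw [hU, if_neg (by simp [Prod.ext_iff, huv]), hval]
  rw [hG]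
  simp only [Function.comp_apply]
  rw [hD, hS, hUval, hφ]
  -- reduce to a real identity
  have hNne : (N : ℝ) ≠ 0 := by linarith
  have hKne : (K : ℝ) ≠ 0 := by linarith
  have hMne : (M : ℝ) ≠ 0 := by linarith
  have hcond' : -gt + sM * bt = (N : ℝ) * (1 / K - 1 / 2) * c := by
    rw [hc]
    field_simp at hcond ⊢
    linarith [hcond]
  have hKMR : (K : ℝ) * M = (N : ℝ) := by exact_mod_cast hKM
  have hMd : ((M : ℝ) - 1) * d = sM * bt := by
    rw [hd, ← hsMsq]
    field_simp
  have hsN2 : (1 / sN) * (1 / sN) = 1 / (N : ℝ) := by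
    rw [div_mul_div_comm, one_mul, ← sq, hsNsq]
  have key : 2 / (N : ℝ) * ((-gt + ((M : ℝ) - 1) * d) + ((K : ℝ) - 1) * (M * c)) - c
      = 0 := by
    rw [hMd, hcond', ← hKMR]
    field_simp
    ring
  have key2 : 2 * ((1 / sN) * ((-gt + ((M : ℝ) - 1) * d) + ((K : ℝ) - 1) * (M * c)))
      * (1 / sN) - c = 0 := by
    calc 2 * ((1 / sN) * ((-gt + ((M : ℝ) - 1) * d) + ((K : ℝ) - 1) * (M * c))) * (1 / sN) - c
        = 2 * ((-gt + ((M : ℝ) - 1) * d) + ((K : ℝ) - 1) * (M * c))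
          * ((1 / sN) * (1 / sN)) - c := by ring
      _ = 2 / (N : ℝ) * ((-gt + ((M : ℝ) - 1) * d) + ((K : ℝ) - 1) * (M * c)) - c := by
          rw [hsN2]; ring
      _ = 0 := key
  have cast_eq : 2 * (((1 / sN : ℝ) : ℂ) *
        ((-(gt : ℂ) + ((M : ℂ) - 1) * (d : ℝ)) + ((K : ℂ) - 1) * ((M : ℂ) * (c : ℝ))))
      * ((1 / sN : ℝ) : ℂ) - ((c : ℝ) : ℂ) =
      ((2 * ((1 / sN) * ((-gt + ((M : ℝ) - 1) * d) + ((K : ℝ) - 1) * (M * c)))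
        * (1 / sN) - c : ℝ) : ℂ) := by
    push_cast
    ring
  rw [cast_eq, key2]
  exact Complex.ofReal_zero
end

section
/- For every real x > 2, letting β = arcsin(√(x/(4(x−1)))), one has 2·√x·sin(2β)/(x − 4·sin²β) = √(3x−4)/(x−2). Consequently, for every integer q ≥ 2, setting α_q = (√(2^q)/2)·arctan(√(3·2^q − 4)/(2^q − 2)) and β_q = arcsin(√(2^q/(4(2^q − 1)))), one has tan(2α_q/√(2^q)) = 2·√(2^q)·sin(2β_q)/(2^q − 4·sin²β_q). -/
open Real

lemma part1 (x : ℝ) (hx : 2 < x) :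
    2 * Real.sqrt x * Real.sin (2 * Real.arcsin (Real.sqrt (x / (4 * (x - 1))))) /
        (x - 4 * Real.sin (Real.arcsin (Real.sqrt (x / (4 * (x - 1))))) ^ 2)
      = Real.sqrt (3 * x - 4) / (x - 2) := by
  have hx1 : (0:ℝ) < x - 1 := by linarith
  have hx2 : (0:ℝ) < x - 2 := by linarith
  have hx0 : (0:ℝ) < x := by linarith
  have hs0 : 0 ≤ x / (4 * (x - 1)) := by positivity
  have hs1 : x / (4 * (x - 1)) ≤ 1 := by
    rw [div_le_one (by positivity)]; nlinarith
  have hsin : Real.sin (Real.arcsin (Real.sqrt (x / (4 * (x - 1))))) =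
      Real.sqrt (x / (4 * (x - 1))) :=
    Real.sin_arcsin (by linarith [Real.sqrt_nonneg (x / (4 * (x - 1)))]) (Real.sqrt_le_one.mpr hs1)
  have hcos : Real.cos (Real.arcsin (Real.sqrt (x / (4 * (x - 1))))) =
      Real.sqrt ((3 * x - 4) / (4 * (x - 1))) := by
    rw [Real.cos_arcsin, Real.sq_sqrt hs0]
    congr 1
    field_simp
    ring
  have hsq : Real.sqrt (x / (4 * (x - 1))) = Real.sqrt x / (2 * Real.sqrt (x - 1)) := by
    rw [Real.sqrt_div hx0.le, show (4:ℝ) * (x-1) = 2^2 * (x-1) by ring,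
      Real.sqrt_mul (by positivity), Real.sqrt_sq (by norm_num)]
  have hsq2 : Real.sqrt ((3 * x - 4) / (4 * (x - 1))) =
      Real.sqrt (3 * x - 4) / (2 * Real.sqrt (x - 1)) := by
    rw [Real.sqrt_div (by linarith), show (4:ℝ) * (x-1) = 2^2 * (x-1) by ring,
      Real.sqrt_mul (by positivity), Real.sqrt_sq (by norm_num)]
  rw [Real.sin_two_mul, hsin, hcos, hsq, hsq2]
  have ha : Real.sqrt x ^ 2 = x := Real.sq_sqrt hx0.le
  have hc : Real.sqrt (x - 1) ^ 2 = x - 1 := Real.sq_sqrt hx1.le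
  have hcpos : 0 < Real.sqrt (x - 1) := Real.sqrt_pos.mpr hx1
  have hden : x - 4 * (Real.sqrt x / (2 * Real.sqrt (x - 1))) ^ 2 = x * (x - 2) / (x - 1) := by
    rw [div_pow, ha, mul_pow, hc]
    field_simp
    ring
  have hnum : 2 * Real.sqrt x * (2 * (Real.sqrt x / (2 * Real.sqrt (x - 1))) *
      (Real.sqrt (3 * x - 4) / (2 * Real.sqrt (x - 1)))) =
      x * Real.sqrt (3 * x - 4) / (x - 1) := by
    field_simp
    rw [show x * 3 - 4 = 3 * x - 4 by ring]
    linear_combination ((x - 1) * Real.sqrt (3 * x - 4)) * ha -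
      (x * Real.sqrt (3 * x - 4)) * hc
  rw [hnum, hden]
  field_simp

theorem stmt_1 :
    (∀ x : ℝ, 2 < x →
      2 * Real.sqrt x * Real.sin (2 * Real.arcsin (Real.sqrt (x / (4 * (x - 1))))) /
          (x - 4 * Real.sin (Real.arcsin (Real.sqrt (x / (4 * (x - 1))))) ^ 2)
        = Real.sqrt (3 * x - 4) / (x - 2)) ∧
    (∀ q : ℕ, 2 ≤ q →
      Real.tan (2 * ((Real.sqrt (2 ^ q) / 2) *
            Real.arctan (Real.sqrt (3 * 2 ^ q - 4) / ((2 : ℝ) ^ q - 2))) / Real.sqrt (2 ^ q))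
        = 2 * Real.sqrt (2 ^ q) *
              Real.sin (2 * Real.arcsin (Real.sqrt ((2 : ℝ) ^ q / (4 * ((2 : ℝ) ^ q - 1))))) /
            ((2 : ℝ) ^ q -
              4 * Real.sin (Real.arcsin (Real.sqrt ((2 : ℝ) ^ q / (4 * ((2 : ℝ) ^ q - 1))))) ^ 2)) := by
  constructor
  · exact part1
  · intro q hq
    have hx : (2:ℝ) < 2 ^ q := by
      calc (2:ℝ) < 4 := by norm_num
      _ ≤ 2 ^ q := by
        calc (4:ℝ) = 2 ^ 2 := by norm_num
        _ ≤ 2 ^ q := by exact pow_le_pow_right₀ (by norm_num) hq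
    have hs : Real.sqrt (2 ^ q) ≠ 0 := by positivity
    have : (2 * ((Real.sqrt (2 ^ q) / 2) *
        Real.arctan (Real.sqrt (3 * 2 ^ q - 4) / ((2 : ℝ) ^ q - 2))) / Real.sqrt (2 ^ q))
        = Real.arctan (Real.sqrt (3 * 2 ^ q - 4) / ((2 : ℝ) ^ q - 2)) := by
      field_simp
    rw [this, Real.tan_arctan, ← part1 (2 ^ q) hx]
end

section
/- For every real x > 2, the function F : ℝ → ℝ defined by F(β) = β − (√x/2)·arctan(2·√x·sin(2β)/(x − 4·sin²β)) has derivative equal to 0 at the point β* = arcsin(√(x/(4(x−1)))), i.e. deriv F β* = 0. -/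
open Real

/-- First-order condition in the proof of Proposition 2: β* is a critical point. -/
theorem stmt_2 (x : ℝ) (hx : 2 < x) :
    deriv (fun β : ℝ => β - (Real.sqrt x / 2) *
      Real.arctan (2 * Real.sqrt x * Real.sin (2 * β) / (x - 4 * Real.sin β ^ 2)))
      (Real.arcsin (Real.sqrt (x / (4 * (x - 1))))) = 0 := by
  have hx1 : (0:ℝ) < x - 1 := by linarith
  set t : ℝ := x / (4 * (x - 1)) with ht
  set β₀ : ℝ := Real.arcsin (Real.sqrt t) with hβ₀
  have ht0 : 0 ≤ t := by positivity
  have ht1 : t ≤ 1 := by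
    rw [ht, div_le_one (by positivity)]
    linarith
  have hsin : Real.sin β₀ = Real.sqrt t := by
    rw [hβ₀, Real.sin_arcsin (by linarith [Real.sqrt_nonneg t])
      (by rw [show (1:ℝ) = Real.sqrt 1 by simp]; exact Real.sqrt_le_sqrt ht1)]
  have hs2 : Real.sin β₀ ^ 2 = t := by rw [hsin, Real.sq_sqrt ht0]
  have hc2 : Real.cos β₀ ^ 2 = 1 - t := by
    have := Real.sin_sq_add_cos_sq β₀
    nlinarith
  have hr2 : Real.sqrt x ^ 2 = x := Real.sq_sqrt (by linarith)
  set s := Real.sin β₀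
  set c := Real.cos β₀
  set r := Real.sqrt x
  have h4t : 4 * (x - 1) * t = x := by rw [ht]; field_simp
  have hvpos : 0 < x - 4 * s ^ 2 := by
    rw [hs2]
    nlinarith [h4t, mul_pos (show (0:ℝ) < x by linarith) (show (0:ℝ) < x - 2 by linarith)]
  have hv : x - 4 * s ^ 2 ≠ 0 := hvpos.ne'
  -- derivative of inner numerator
  have h1 : HasDerivAt (fun β : ℝ => Real.sin (2 * β)) (Real.cos (2 * β₀) * 2) β₀ := by
    have h := (Real.hasDerivAt_sin (2 * β₀)).comp β₀ ((hasDerivAt_id β₀).const_mul 2)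
    simpa [Function.comp_def] using h
  have hnum : HasDerivAt (fun β : ℝ => 2 * r * Real.sin (2 * β))
      (2 * r * (Real.cos (2 * β₀) * 2)) β₀ := h1.const_mul _
  have hden : HasDerivAt (fun β : ℝ => x - 4 * Real.sin β ^ 2)
      (-(4 * (2 * s ^ 1 * c))) β₀ := by
    have := ((Real.hasDerivAt_sin β₀).pow 2).const_mul (4:ℝ)
    simpa using (this.const_sub x)
  have hdiv : HasDerivAt (fun β : ℝ => 2 * r * Real.sin (2 * β) / (x - 4 * Real.sin β ^ 2))
      ((2 * r * (Real.cos (2 * β₀) * 2) * (x - 4 * s ^ 2) -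
        2 * r * Real.sin (2 * β₀) * (-(4 * (2 * s ^ 1 * c)))) / (x - 4 * s ^ 2) ^ 2) β₀ :=
    hnum.div hden hv
  set q : ℝ := 2 * r * Real.sin (2 * β₀) / (x - 4 * s ^ 2) with hq
  have harctan : HasDerivAt (fun β : ℝ => Real.arctan
      (2 * r * Real.sin (2 * β) / (x - 4 * Real.sin β ^ 2)))
      ((1 / (1 + q ^ 2)) * ((2 * r * (Real.cos (2 * β₀) * 2) * (x - 4 * s ^ 2) -
        2 * r * Real.sin (2 * β₀) * (-(4 * (2 * s ^ 1 * c)))) / (x - 4 * s ^ 2) ^ 2)) β₀ :=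
    by have := (Real.hasDerivAt_arctan q).comp β₀ hdiv; exact this
  have hF : HasDerivAt (fun β : ℝ => β - (r / 2) *
      Real.arctan (2 * r * Real.sin (2 * β) / (x - 4 * Real.sin β ^ 2)))
      (1 - (r / 2) * ((1 / (1 + q ^ 2)) * ((2 * r * (Real.cos (2 * β₀) * 2) * (x - 4 * s ^ 2) -
        2 * r * Real.sin (2 * β₀) * (-(4 * (2 * s ^ 1 * c)))) / (x - 4 * s ^ 2) ^ 2))) β₀ :=
    (hasDerivAt_id β₀).sub (harctan.const_mul _)
  have hval : (1 - (r / 2) * ((1 / (1 + q ^ 2)) * ((2 * r * (Real.cos (2 * β₀) * 2) * (x - 4 * s ^ 2) -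
        2 * r * Real.sin (2 * β₀) * (-(4 * (2 * s ^ 1 * c)))) / (x - 4 * s ^ 2) ^ 2))) = 0 := by
    have hsin2 : Real.sin (2 * β₀) = 2 * s * c := Real.sin_two_mul β₀
    have hcos2 : Real.cos (2 * β₀) = 1 - 2 * s ^ 2 := by
      rw [Real.cos_two_mul]; nlinarith [Real.sin_sq_add_cos_sq β₀]
    have h1q : 1 + q ^ 2 ≠ 0 := by positivity
    rw [hq, hsin2, hcos2]
    have hc2' : c ^ 2 = 1 - t := hc2
    have hs2' : s ^ 2 = t := hs2
    have hC : 4 * (x - 1) * s ^ 2 = x := by rw [hs2']; exact h4t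
    have hv' : x - s ^ 2 * 4 ≠ 0 := by rw [mul_comm]; exact hv
    field_simp
    linear_combination (x - 4*s^2) * hC - (2*(x-4*s^2)*(1-2*s^2)) * hr2
  rw [hval] at hF
  exact hF.deriv
end

section
/- For every real x ≥ 4, the function F : ℝ → ℝ defined by F(β) = β − (√x/2)·arctan(2·√x·sin(2β)/(x − 4·sin²β)) has strictly positive second derivative at β* = arcsin(√(x/(4(x−1)))), i.e. deriv (deriv F) β* > 0; in particular β* is a strict local minimum of F. -/
open Real

noncomputable def Dfn (x : ℝ) (β : ℝ) : ℝ := x - 4 * Real.sin β ^ 2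

noncomputable def gfn (x : ℝ) (β : ℝ) : ℝ :=
  (Dfn x β * (Dfn x β - 2 * x * Real.cos (2 * β))) /
    (Dfn x β ^ 2 + 4 * x * Real.sin (2 * β) ^ 2)

lemma Dfn_eq (x β : ℝ) : Dfn x β = x - 2 + 2 * Real.cos (2 * β) := by
  have := Real.cos_sq' β
  unfold Dfn
  rw [Real.cos_two_mul]
  nlinarith [this]

lemma hasDerivAt_D (x β : ℝ) :
    HasDerivAt (fun β => x - 4 * Real.sin β ^ 2) (-(4 * Real.sin (2 * β))) β := by
  have h := ((Real.hasDerivAt_sin β).pow 2).const_mul (4 : ℝ)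
  have h2 := (hasDerivAt_const β x).sub h
  refine h2.congr_deriv (Eq.symm ?_)
  rw [Real.sin_two_mul]; ring

lemma hasDerivAt_sin2 (β : ℝ) :
    HasDerivAt (fun β => Real.sin (2 * β)) (2 * Real.cos (2 * β)) β := by
  have h := (Real.hasDerivAt_sin (2 * β)).comp β ((hasDerivAt_id β).const_mul 2)
  refine h.congr_deriv (Eq.symm ?_)
  ring

lemma hasDerivAt_cos2 (β : ℝ) :
    HasDerivAt (fun β => Real.cos (2 * β)) (-(2 * Real.sin (2 * β))) β := by
  have h := (Real.hasDerivAt_cos (2 * β)).comp β ((hasDerivAt_id β).const_mul 2)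
  refine h.congr_deriv (Eq.symm ?_)
  ring

lemma hasDerivAt_F (x : ℝ) (hx0 : 0 ≤ x) (β : ℝ) (hD : Dfn x β ≠ 0) :
    HasDerivAt (fun β : ℝ => β - (Real.sqrt x / 2) *
        Real.arctan (2 * Real.sqrt x * Real.sin (2 * β) / (x - 4 * Real.sin β ^ 2)))
      (gfn x β) β := by
  have hnum : HasDerivAt (fun β => 2 * Real.sqrt x * Real.sin (2 * β))
      (2 * Real.sqrt x * (2 * Real.cos (2 * β))) β := (hasDerivAt_sin2 β).const_mul _
  have hv := hnum.div (hasDerivAt_D x β) hD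
  have harctan := hv.arctan
  have hF := (hasDerivAt_id β).sub (harctan.const_mul (Real.sqrt x / 2))
  refine hF.congr_deriv (Eq.symm ?_)
  simp only [Pi.div_apply]
  have hsq : Real.sqrt x ^ 2 = x := Real.sq_sqrt hx0
  have hQ : (0:ℝ) < Dfn x β ^ 2 + 4 * x * Real.sin (2 * β) ^ 2 := by
    have := sq_pos_of_ne_zero hD
    positivity
  have hQ' := ne_of_gt hQ
  have hDC := Dfn_eq x β
  unfold gfn Dfn at *
  rw [hDC] at hD hQ hQ' ⊢
  set r := Real.sqrt x with hrdef
  rw [← hsq] at hD hQ hQ' ⊢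
  field_simp
  ring

/-- Second-order condition in the proof of Proposition 2: for x ≥ 4 the second derivative
at β* is strictly positive, and β* is a strict local minimum. -/
theorem stmt_3 (x : ℝ) (hx : 4 ≤ x) :
    0 < deriv (deriv (fun β : ℝ => β - (Real.sqrt x / 2) *
        Real.arctan (2 * Real.sqrt x * Real.sin (2 * β) / (x - 4 * Real.sin β ^ 2))))
        (Real.arcsin (Real.sqrt (x / (4 * (x - 1))))) ∧
    ∀ᶠ β in nhdsWithin (Real.arcsin (Real.sqrt (x / (4 * (x - 1)))))
        {Real.arcsin (Real.sqrt (x / (4 * (x - 1))))}ᶜ,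
      (fun β : ℝ => β - (Real.sqrt x / 2) *
          Real.arctan (2 * Real.sqrt x * Real.sin (2 * β) / (x - 4 * Real.sin β ^ 2)))
        (Real.arcsin (Real.sqrt (x / (4 * (x - 1))))) <
      (fun β : ℝ => β - (Real.sqrt x / 2) *
          Real.arctan (2 * Real.sqrt x * Real.sin (2 * β) / (x - 4 * Real.sin β ^ 2))) β := by
  have hx0 : (0:ℝ) ≤ x := by linarith
  have hxm1 : (0:ℝ) < x - 1 := by linarith
  set Fn : ℝ → ℝ := fun β : ℝ => β - (Real.sqrt x / 2) *
      Real.arctan (2 * Real.sqrt x * Real.sin (2 * β) / (x - 4 * Real.sin β ^ 2)) with hFndef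
  set t : ℝ := x / (4 * (x - 1)) with htdef
  have ht0 : 0 < t := by apply div_pos <;> linarith
  have ht1 : t < 1 := by rw [htdef, div_lt_one (by linarith)]; linarith
  set a := Real.arcsin (Real.sqrt t) with hadef
  have hsin : Real.sin a = Real.sqrt t :=
    Real.sin_arcsin (by linarith [Real.sqrt_nonneg t]) (Real.sqrt_le_one.mpr ht1.le)
  have hsin2 : Real.sin a ^ 2 = t := by rw [hsin]; exact Real.sq_sqrt ht0.le
  have hsinpos : 0 < Real.sin a := by rw [hsin]; exact Real.sqrt_pos.mpr ht0
  have hcospos : 0 < Real.cos a := by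
    rw [hadef, Real.cos_arcsin]
    apply Real.sqrt_pos.mpr
    rw [Real.sq_sqrt ht0.le]; linarith
  have hS2 : 0 < Real.sin (2 * a) := by
    rw [Real.sin_two_mul]; positivity
  have hc2a : Real.cos (2 * a) = (x - 2) / (2 * (x - 1)) := by
    have h1 : Real.cos (2 * a) = 1 - 2 * Real.sin a ^ 2 := by
      rw [Real.cos_two_mul]; linarith [Real.cos_sq' a]
    rw [h1, hsin2, htdef]; field_simp; ring
  have hDa : Dfn x a = x * (x - 2) / (x - 1) := by
    unfold Dfn; rw [hsin2, htdef]; field_simp; ring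
  have hDapos : 0 < Dfn x a := by
    rw [hDa]; apply div_pos (by nlinarith) hxm1
  have hkey : Dfn x a - 2 * x * Real.cos (2 * a) = 0 := by
    rw [hDa, hc2a]; field_simp; ring
  have hQa : 0 < Dfn x a ^ 2 + 4 * x * Real.sin (2 * a) ^ 2 := by
    have h1 : 0 < Dfn x a ^ 2 := by positivity
    have h2 : (0:ℝ) ≤ 4 * x * Real.sin (2 * a) ^ 2 := by positivity
    linarith
  have hga0 : gfn x a = 0 := by unfold gfn; rw [hkey, mul_zero, zero_div]
  -- derivative of g at a
  have hg : HasDerivAt (gfn x)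
      ((Dfn x a * (4 * (x - 1) * Real.sin (2 * a))) /
        (Dfn x a ^ 2 + 4 * x * Real.sin (2 * a) ^ 2)) a := by
    have h1 := (hasDerivAt_D x a).mul
      ((hasDerivAt_D x a).sub ((hasDerivAt_cos2 a).const_mul (2 * x)))
    have hQa' : ((x - 4 * Real.sin a ^ 2) ^ 2 + 4 * x * Real.sin (2 * a) ^ 2) ≠ 0 := by
      have : Dfn x a = x - 4 * Real.sin a ^ 2 := rfl
      rw [← this]; exact ne_of_gt hQa
    have h2 := ((hasDerivAt_D x a).pow 2).add
      (((hasDerivAt_sin2 a).pow 2).const_mul (4 * x))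
    have h3 := h1.div h2 hQa'
    refine h3.congr_deriv (Eq.symm ?_)
    simp only [Pi.sub_apply, Pi.mul_apply, Pi.add_apply, Pi.pow_apply]
    have hk : x - 4 * Real.sin a ^ 2 - 2 * x * Real.cos (2 * a) = 0 := hkey
    rw [hk]
    unfold Dfn
    push_cast
    field_simp
    ring
  have hdpos : 0 < (Dfn x a * (4 * (x - 1) * Real.sin (2 * a))) /
      (Dfn x a ^ 2 + 4 * x * Real.sin (2 * a) ^ 2) :=
    div_pos (mul_pos hDapos (by positivity)) hQa
  -- deriv Fn = gfn x near a
  have hcontD : Continuous fun β => Dfn x β := by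
    unfold Dfn; continuity
  have hUopen : IsOpen {β | Dfn x β ≠ 0} :=
    isOpen_compl_singleton.preimage hcontD
  have hmem : {β | Dfn x β ≠ 0} ∈ nhds a := hUopen.mem_nhds (ne_of_gt hDapos)
  have hF' : ∀ β, Dfn x β ≠ 0 → HasDerivAt Fn (gfn x β) β := fun β hβ =>
    hasDerivAt_F x hx0 β hβ
  have hFg : deriv Fn =ᶠ[nhds a] gfn x := by
    filter_upwards [hmem] with β hβ
    exact (hF' β hβ).deriv
  constructor
  · have h1 : deriv (deriv Fn) a = deriv (gfn x) a := hFg.deriv_eq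
    rw [h1, hg.deriv]
    exact hdpos
  · -- strict local min
    have hslope : Filter.Tendsto (slope (gfn x) a) (nhdsWithin a {a}ᶜ)
        (nhds ((Dfn x a * (4 * (x - 1) * Real.sin (2 * a))) /
          (Dfn x a ^ 2 + 4 * x * Real.sin (2 * a) ^ 2))) :=
      hasDerivAt_iff_tendsto_slope.mp hg
    have hslope' : ∀ᶠ y in nhdsWithin a {a}ᶜ, 0 < slope (gfn x) a y :=
      hslope.eventually (eventually_gt_nhds hdpos)
    rw [eventually_nhdsWithin_iff] at hslope' ⊢
    have hall : ∀ᶠ y in nhds a, (Dfn x y ≠ 0 ∧ (y ∈ ({a}ᶜ : Set ℝ) → 0 < slope (gfn x) a y)) :=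
      (Filter.eventually_iff_exists_mem.mpr ⟨_, hmem, fun y hy => hy⟩).and hslope'
    rw [Metric.eventually_nhds_iff] at hall ⊢
    obtain ⟨ε, hε, hball⟩ := hall
    refine ⟨ε, hε, fun β hdist hne => ?_⟩
    have hne' : β ≠ a := hne
    have hgpos : ∀ y, dist y a < ε → y ≠ a → 0 < slope (gfn x) a y := fun y h1 h2 =>
      (hball h1).2 h2
    have hderiv : ∀ y, dist y a < ε → y ≠ a → (y - a) * slope (gfn x) a y = gfn x y := by
      intro y h1 h2
      rw [slope_def_field, hga0, sub_zero, mul_comm,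
        div_mul_cancel₀ _ (sub_ne_zero.mpr h2)]
    rcases lt_or_gt_of_ne hne' with hlt | hgt
    · -- β < a : F strictly decreasing on [β, a]
      have hmono : StrictAntiOn Fn (Set.Icc β a) := by
        apply strictAntiOn_of_deriv_neg (convex_Icc β a)
        · intro y hy
          have hyd : dist y a < ε := by
            rw [Real.dist_eq] at hdist ⊢
            rw [abs_lt] at hdist ⊢
            constructor <;> [linarith [hy.1, hy.2]; linarith [hy.1, hy.2]]
          exact ((hF' y (hball hyd).1).continuousAt).continuousWithinAt
        · intro y hy
          rw [interior_Icc] at hy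
          have hyd : dist y a < ε := by
            rw [Real.dist_eq] at hdist ⊢
            rw [abs_lt] at hdist ⊢
            constructor <;> [linarith [hy.1, hy.2]; linarith [hy.1, hy.2]]
          have hyne : y ≠ a := ne_of_lt hy.2
          rw [(hF' y (hball hyd).1).deriv, ← hderiv y hyd hyne]
          exact mul_neg_of_neg_of_pos (by linarith [hy.2]) (hgpos y hyd hyne)
      exact hmono (Set.left_mem_Icc.mpr hlt.le) ⟨hlt.le, le_refl a⟩ hlt
    · -- a < β : F strictly increasing on [a, β]
      have hmono : StrictMonoOn Fn (Set.Icc a β) := by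
        apply strictMonoOn_of_deriv_pos (convex_Icc a β)
        · intro y hy
          have hyd : dist y a < ε := by
            rw [Real.dist_eq] at hdist ⊢
            rw [abs_lt] at hdist ⊢
            constructor <;> [linarith [hy.1, hy.2]; linarith [hy.1, hy.2]]
          exact ((hF' y (hball hyd).1).continuousAt).continuousWithinAt
        · intro y hy
          rw [interior_Icc] at hy
          have hyd : dist y a < ε := by
            rw [Real.dist_eq] at hdist ⊢
            rw [abs_lt] at hdist ⊢
            constructor <;> [linarith [hy.1, hy.2]; linarith [hy.1, hy.2]]
          have hyne : y ≠ a := ne_of_gt hy.1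
          rw [(hF' y (hball hyd).1).deriv, ← hderiv y hyd hyne]
          exact mul_pos (by linarith [hy.1]) (hgpos y hyd hyne)
      exact hmono ⟨le_refl a, hgt.le⟩ ⟨hgt.le, le_refl β⟩ hgt
end

section
/- The function F₂ : ℝ → ℝ defined by F₂(β) = β − (√2/2)·arctan(2·√2·sin(2β)/(2 − 4·sin²β)) is strictly decreasing on the open interval (0, π/4); indeed, for every β ∈ (0, π/4) its derivative equals (4·sin²β − 2)²/((4·sin²β − 2)² − 8), which is strictly negative. -/
open Real

lemma aux_hasDeriv (β : ℝ) (hβ : β ∈ Set.Ioo (0:ℝ) (Real.pi/4)) :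
    HasDerivAt (fun β : ℝ => β - (Real.sqrt 2 / 2) *
        Real.arctan (2 * Real.sqrt 2 * Real.sin (2 * β) / (2 - 4 * Real.sin β ^ 2)))
      ((4 * Real.sin β ^ 2 - 2) ^ 2 / ((4 * Real.sin β ^ 2 - 2) ^ 2 - 8)) β := by
  obtain ⟨h0, h1⟩ := hβ
  have hc2 : 0 < Real.cos (2 * β) := by
    apply Real.cos_pos_of_mem_Ioo
    constructor <;> [linarith [Real.pi_pos]; linarith]
  have hcos2 : Real.cos (2 * β) = 1 - 2 * Real.sin β ^ 2 := by
    have := Real.cos_two_mul β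
    have := Real.sin_sq_add_cos_sq β
    linarith
  have hDne : (2 : ℝ) - 4 * Real.sin β ^ 2 ≠ 0 := by
    have : 2 - 4 * Real.sin β ^ 2 = 2 * Real.cos (2 * β) := by linarith
    rw [this]; positivity
  have h2β : HasDerivAt (fun β : ℝ => 2 * β) 2 β := by
    simpa using (hasDerivAt_id β).const_mul 2
  have hsin2 : HasDerivAt (fun β : ℝ => Real.sin (2 * β)) (Real.cos (2 * β) * 2) β :=
    (Real.hasDerivAt_sin (2 * β)).comp β h2β
  have hN : HasDerivAt (fun β : ℝ => 2 * Real.sqrt 2 * Real.sin (2 * β))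
      (2 * Real.sqrt 2 * (Real.cos (2 * β) * 2)) β := hsin2.const_mul _
  have hsinsq : HasDerivAt (fun β : ℝ => Real.sin β ^ 2)
      (2 * Real.sin β ^ 1 * Real.cos β) β := (Real.hasDerivAt_sin β).pow 2
  have hD : HasDerivAt (fun β : ℝ => 2 - 4 * Real.sin β ^ 2)
      (-(4 * (2 * Real.sin β ^ 1 * Real.cos β))) β := (hsinsq.const_mul 4).const_sub 2
  have hg := hN.div hD hDne
  have harctan := (Real.hasDerivAt_arctan
      (2 * Real.sqrt 2 * Real.sin (2 * β) / (2 - 4 * Real.sin β ^ 2))).comp β hg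
  have hF := (hasDerivAt_id β).sub (harctan.const_mul (Real.sqrt 2 / 2))
  convert hF using 1
  case e'_4 => rfl
  case e'_5 => rfl
  case e'_8 => rfl
  set s := Real.sin β with hs
  set c := Real.cos β with hc
  set r := Real.sqrt 2 with hr
  have hpy : s ^ 2 + c ^ 2 = 1 := Real.sin_sq_add_cos_sq β
  have hrt : r ^ 2 = 2 := Real.sq_sqrt (by norm_num)
  rw [Real.sin_two_mul, hcos2]
  have hnum : 2 * r * ((1 - 2 * s ^ 2) * 2) * (2 - 4 * s ^ 2) -
      2 * r * (2 * s * c) * -(4 * (2 * s ^ 1 * c)) = 8 * r := by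
    linear_combination (32 * r * s ^ 2) * hpy
  rw [hnum]
  have hgsq : (2 * r * (2 * s * c) / (2 - 4 * s ^ 2)) ^ 2
      = 32 * s ^ 2 * c ^ 2 / (2 - 4 * s ^ 2) ^ 2 := by
    rw [div_pow]
    congr 1
    linear_combination (16 * s ^ 2 * c ^ 2) * hrt
  rw [hgsq]
  have hD2 : ((2 : ℝ) - 4 * s ^ 2) ^ 2 ≠ 0 := pow_ne_zero _ hDne
  have h1 : (1 : ℝ) + 32 * s ^ 2 * c ^ 2 / (2 - 4 * s ^ 2) ^ 2
      = ((2 - 4 * s ^ 2) ^ 2 + 32 * s ^ 2 * c ^ 2) / (2 - 4 * s ^ 2) ^ 2 := by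
    rw [add_div, div_self hD2]
  have hsum : ((2 : ℝ) - 4 * s ^ 2) ^ 2 + 32 * s ^ 2 * c ^ 2 = 4 + 16 * s ^ 2 * c ^ 2 := by
    linear_combination (16 * s ^ 2) * hpy
  rw [h1, hsum]
  have hpos : (0 : ℝ) < 4 + 16 * s ^ 2 * c ^ 2 := by positivity
  have hden : ((4 : ℝ) * s ^ 2 - 2) ^ 2 - 8 = -(4 + 16 * s ^ 2 * c ^ 2) := by
    linear_combination (16 * s ^ 2) * hpy
  have hDsq : ((4 : ℝ) * s ^ 2 - 2) ^ 2 = 4 - 16 * s ^ 2 * c ^ 2 := by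
    linear_combination (16 * s ^ 2) * hpy
  rw [hden, hDsq]
  have hsimp : (1:ℝ)/((4 + 16 * s ^ 2 * c ^ 2)/(2 - 4 * s ^ 2) ^ 2) * (8 * r/(2 - 4 * s ^ 2) ^ 2)
      = 8 * r / (4 + 16 * s ^ 2 * c ^ 2) := by
    field_simp
  rw [hsimp]
  have h8 : r / 2 * (8 * r / (4 + 16 * s ^ 2 * c ^ 2)) = 8 / (4 + 16 * s ^ 2 * c ^ 2) := by
    field_simp
    linear_combination hrt
  rw [h8]
  rw [div_neg, eq_comm, sub_eq_iff_eq_add]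
  field_simp
  ring

lemma aux_neg (β : ℝ) (hβ : β ∈ Set.Ioo (0:ℝ) (Real.pi/4)) :
    (4 * Real.sin β ^ 2 - 2) ^ 2 / ((4 * Real.sin β ^ 2 - 2) ^ 2 - 8) < 0 := by
  obtain ⟨h0, h1⟩ := hβ
  have hc2 : 0 < Real.cos (2 * β) := by
    apply Real.cos_pos_of_mem_Ioo
    constructor <;> [linarith [Real.pi_pos]; linarith]
  have hcos2 : Real.cos (2 * β) = 1 - 2 * Real.sin β ^ 2 := by
    have := Real.cos_two_mul β
    have := Real.sin_sq_add_cos_sq β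
    linarith
  have hp : 0 < (4 * Real.sin β ^ 2 - 2) ^ 2 := by
    nlinarith [mul_pos hc2 hc2]
  have hn : (4 * Real.sin β ^ 2 - 2) ^ 2 - 8 < 0 := by
    nlinarith [Real.sin_sq_le_one β, sq_nonneg (Real.sin β)]
  exact div_neg_of_pos_of_neg hp hn

/-- The case q = 1 (x = 2) in the proof of Proposition 2: the function F₂ is strictly
decreasing on (0, π/4), its derivative there being (4 sin²β − 2)²/((4 sin²β − 2)² − 8) < 0. -/
theorem stmt_4 :
    StrictAntiOn (fun β : ℝ => β - (Real.sqrt 2 / 2) *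
        Real.arctan (2 * Real.sqrt 2 * Real.sin (2 * β) / (2 - 4 * Real.sin β ^ 2)))
      (Set.Ioo 0 (Real.pi / 4)) ∧
    ∀ β ∈ Set.Ioo (0 : ℝ) (Real.pi / 4),
      deriv (fun β : ℝ => β - (Real.sqrt 2 / 2) *
          Real.arctan (2 * Real.sqrt 2 * Real.sin (2 * β) / (2 - 4 * Real.sin β ^ 2))) β
        = (4 * Real.sin β ^ 2 - 2) ^ 2 / ((4 * Real.sin β ^ 2 - 2) ^ 2 - 8) ∧
      (4 * Real.sin β ^ 2 - 2) ^ 2 / ((4 * Real.sin β ^ 2 - 2) ^ 2 - 8) < 0 := by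
  constructor
  · apply strictAntiOn_of_deriv_neg (convex_Ioo _ _)
    · intro x hx
      exact (aux_hasDeriv x hx).continuousAt.continuousWithinAt
    · intro x hx
      rw [interior_Ioo] at hx
      rw [(aux_hasDeriv x hx).deriv]
      exact aux_neg x hx
  · intro β hβ
    exact ⟨(aux_hasDeriv β hβ).deriv, aux_neg β hβ⟩
end

section
/- Let n ≥ 1 be an integer and let a, E, F, θ, φ be real numbers with F > 0, a ≠ 0, and (E − 2^{n−1}·F)² ≤ a². Suppose cos θ = (2^{2n−1}·F² − 2^n·E·F + E² − a²)/(E² − 2^n·E·F − a²), cos φ = (2^{n−1}·F − E)/a, and a·sin φ·sin θ > 0. Then cos(φ + θ/2) = −E·cos(θ/2)/a and sin(φ + θ/2) = ((cos θ − 1)·E + 2^n·F)/(2·a·sin(θ/2)). -/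
open Real

set_option maxHeartbeats 1600000 in
/-- Lemma 1 of the paper: choice of phases θ, φ for the generalized Grover operator. -/
theorem stmt_5 (n : ℕ) (hn : 1 ≤ n) (a E F θ φ : ℝ)
    (hF : 0 < F) (ha : a ≠ 0)
    (hineq : (E - 2 ^ (n - 1) * F) ^ 2 ≤ a ^ 2)
    (hcosθ : Real.cos θ =
      (2 ^ (2 * n - 1) * F ^ 2 - 2 ^ n * E * F + E ^ 2 - a ^ 2) /
        (E ^ 2 - 2 ^ n * E * F - a ^ 2))
    (hcosφ : Real.cos φ = (2 ^ (n - 1) * F - E) / a)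
    (hsign : 0 < a * Real.sin φ * Real.sin θ) :
    Real.cos (φ + θ / 2) = -E * Real.cos (θ / 2) / a ∧
    Real.sin (φ + θ / 2) =
      ((Real.cos θ - 1) * E + 2 ^ n * F) / (2 * a * Real.sin (θ / 2)) := by
  obtain ⟨m, rfl⟩ : ∃ m, n = m + 1 := ⟨n - 1, (Nat.succ_pred_eq_of_pos hn).symm⟩
  have hexp1 : m + 1 - 1 = m := rfl
  have hexp2 : 2 * (m + 1) - 1 = 2 * m + 1 := by omega
  rw [hexp1] at hineq hcosφ
  rw [hexp2] at hcosθ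
  set P : ℝ := 2 ^ m with hPdef
  have hP : (0 : ℝ) < P := by positivity
  have hpow1 : (2 : ℝ) ^ (2 * m + 1) = 2 * P ^ 2 := by
    rw [pow_succ, two_mul m, pow_add]; ring
  have hpow2 : (2 : ℝ) ^ (m + 1) = 2 * P := by rw [pow_succ]; ring
  rw [hpow1, hpow2] at hcosθ
  rw [hpow2]
  clear_value P
  set c := Real.cos (θ / 2) with hc
  set s := Real.sin (θ / 2) with hs
  clear_value c s
  have hcos2 : Real.cos θ = 2 * c ^ 2 - 1 := by
    have h := Real.cos_sq (θ / 2)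
    rw [show 2 * (θ / 2) = θ by ring, ← hc] at h
    linarith
  have hsin2 : Real.sin θ = 2 * s * c := by
    have h := Real.sin_two_mul (θ / 2)
    rw [show 2 * (θ / 2) = θ by ring, ← hc, ← hs] at h
    linarith
  have hsc : s ^ 2 + c ^ 2 = 1 := by
    have := Real.sin_sq_add_cos_sq (θ / 2)
    rw [← hc, ← hs] at this; exact this
  -- denominator is negative
  have hD : E ^ 2 - 2 * P * E * F - a ^ 2 < 0 := by
    nlinarith [pow_pos (mul_pos hP hF) 2]
  have hDne : E ^ 2 - 2 * P * E * F - a ^ 2 ≠ 0 := ne_of_lt hD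
  -- nonvanishing facts from the sign hypothesis
  have hsinθ : Real.sin θ ≠ 0 := by
    intro h; rw [h] at hsign; simp at hsign
  have hsinφ : Real.sin φ ≠ 0 := by
    intro h; rw [h] at hsign; simp at hsign
  have hsne : s ≠ 0 := by
    intro h; apply hsinθ; rw [hsin2, h]; ring
  have hcne : c ≠ 0 := by
    intro h; apply hsinθ; rw [hsin2, h]; ring
  have hc2pos : 0 < c ^ 2 := lt_of_le_of_ne (sq_nonneg c) (Ne.symm (pow_ne_zero 2 hcne))
  -- squares of sin φ
  have hsinφsq : Real.sin φ ^ 2 = 1 - ((P * F - E) / a) ^ 2 := by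
    rw [Real.sin_sq, hcosφ]
  -- key identity : (sin φ * s)^2 = (P*F*c/a)^2
  have hsq : (Real.sin φ * s) ^ 2 = (P * F * c / a) ^ 2 := by
    have h1 : s ^ 2 = (1 - Real.cos θ) / 2 := by linarith
    have h2 : c ^ 2 = (1 + Real.cos θ) / 2 := by linarith
    rw [hcosθ] at h1 h2
    rw [mul_pow, hsinφsq, h1,
      show (P * F * c / a) ^ 2 = (P * F) ^ 2 * c ^ 2 / a ^ 2 by ring, h2]
    generalize hDdef : E ^ 2 - 2 * P * E * F - a ^ 2 = D at hDne ⊢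
    field_simp
    rw [← hDdef]
    ring
  -- resolve the sign
  have hsign' : 0 < a * Real.sin φ * s * c := by
    have h1 : a * Real.sin φ * s * c = a * Real.sin φ * Real.sin θ / 2 := by
      rw [hsin2]; ring
    linarith [hsign]
  have hkey : Real.sin φ * s = P * F * c / a := by
    have hfac : (Real.sin φ * s - P * F * c / a) * (Real.sin φ * s + P * F * c / a) = 0 := by
      linear_combination hsq
    rcases mul_eq_zero.mp hfac with h | h
    · linarith [sub_eq_zero.mp h]
    · exfalso
      have hval : Real.sin φ * s = -(P * F * c / a) := by linarith
      have h1 : a * Real.sin φ * s * c = -(P * F * c ^ 2) := by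
        calc a * Real.sin φ * s * c = a * (Real.sin φ * s) * c := by ring
          _ = a * (-(P * F * c / a)) * c := by rw [hval]
          _ = -(P * F * c ^ 2) := by field_simp
      nlinarith [mul_pos (mul_pos hP hF) hc2pos]
  have hsinφval : Real.sin φ = P * F * c / (a * s) := by
    rw [eq_div_iff (mul_ne_zero ha hsne)]
    field_simp at hkey
    linarith [hkey]
  constructor
  · rw [Real.cos_add, ← hc, ← hs, hcosφ, hsinφval]
    field_simp
    ring
  · rw [Real.sin_add, ← hc, ← hs, hsinφval, hcosφ, hcos2]
    field_simp
    linear_combination 2 * (P * F - E) * hsc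
end

section
/- Let n ≥ 1 be an integer and let a, E, F, θ, φ be real numbers with F > 0, a ≠ 0, and (E − 2^{n−1}·F)² ≤ a². Suppose cos θ = (2^{2n−1}·F² − 2^n·E·F + E² − a²)/(E² − 2^n·E·F − a²), cos φ = (2^{n−1}·F − E)/a, and a·sin φ·sin θ > 0. Then a·sin φ·sin θ = 2^n·F + 2^{3n−2}·F³/(E² − 2^n·E·F − a²). -/
open Real

/-- Key equation (C.5) in the proof of Lemma 1 of the paper. -/
theorem stmt_6 (n : ℕ) (hn : 1 ≤ n) (a E F θ φ : ℝ)
    (hF : 0 < F) (ha : a ≠ 0)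
    (hineq : (E - 2 ^ (n - 1) * F) ^ 2 ≤ a ^ 2)
    (hcosθ : Real.cos θ =
      (2 ^ (2 * n - 1) * F ^ 2 - 2 ^ n * E * F + E ^ 2 - a ^ 2) /
        (E ^ 2 - 2 ^ n * E * F - a ^ 2))
    (hcosφ : Real.cos φ = (2 ^ (n - 1) * F - E) / a)
    (hsign : 0 < a * Real.sin φ * Real.sin θ) :
    a * Real.sin φ * Real.sin θ =
      2 ^ n * F + 2 ^ (3 * n - 2) * F ^ 3 / (E ^ 2 - 2 ^ n * E * F - a ^ 2) := by
  obtain ⟨m, rfl⟩ : ∃ m, n = m + 1 := ⟨n - 1, by omega⟩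
  have e2n : 2 * (m + 1) - 1 = m * 2 + 1 := by omega
  have e3n : 3 * (m + 1) - 2 = m * 3 + 1 := by omega
  have E1 : (2 : ℝ) ^ (m + 1) = 2 * 2 ^ m := by rw [pow_succ]; ring
  have E2 : (2 : ℝ) ^ (2 * (m + 1) - 1) = 2 * ((2:ℝ) ^ m) ^ 2 := by
    rw [e2n, pow_succ, pow_mul]; ring
  have E3 : (2 : ℝ) ^ (3 * (m + 1) - 2) = 2 * ((2:ℝ) ^ m) ^ 3 := by
    rw [e3n, pow_succ, pow_mul]; ring
  have E4 : (2 : ℝ) ^ (m + 1 - 1) = (2:ℝ) ^ m := rfl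
  rw [E4] at hineq hcosφ
  rw [E1, E2] at hcosθ
  rw [E1, E3]
  set P : ℝ := 2 ^ m with hPdef
  have hP : 0 < P := by positivity
  set D : ℝ := E ^ 2 - 2 * P * E * F - a ^ 2 with hDdef
  have hDle : D + P ^ 2 * F ^ 2 ≤ 0 := by nlinarith [sq_nonneg (E - P * F)]
  have hPF : 0 < P ^ 2 * F ^ 2 := by positivity
  have hDneg : D < 0 := by nlinarith
  have hDne : D ≠ 0 := ne_of_lt hDneg
  have hsθ : Real.sin θ ^ 2 = 1 - Real.cos θ ^ 2 := Real.sin_sq θ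
  have hsφ : Real.sin φ ^ 2 = 1 - Real.cos φ ^ 2 := Real.sin_sq φ
  set S : ℝ := a * Real.sin φ * Real.sin θ with hSdef
  set R : ℝ := 2 * P * F + 2 * P ^ 3 * F ^ 3 / D with hRdef
  have hS2 : S ^ 2 = R ^ 2 := by
    have h : S ^ 2 = a ^ 2 * Real.sin φ ^ 2 * Real.sin θ ^ 2 := by ring
    rw [h, hsθ, hsφ, hcosθ, hcosφ, hRdef]
    field_simp
    ring
  have hRnonneg : 0 ≤ R := by
    have h : R = 2 * P * F * (D + P ^ 2 * F ^ 2) / D := by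
      rw [hRdef]; field_simp
    rw [h]
    refine div_nonneg_iff.mpr (Or.inr ⟨?_, le_of_lt hDneg⟩)
    nlinarith [mul_nonneg (by positivity : (0:ℝ) ≤ 2 * P * F) (neg_nonneg.mpr hDle)]
  have hRpos : 0 < R := by
    rcases lt_or_eq_of_le hRnonneg with h | h
    · exact h
    · exfalso; rw [← h] at hS2; nlinarith
  clear_value S R
  have h1 : (S - R) * (S + R) = 0 := by linear_combination hS2
  rcases mul_eq_zero.mp h1 with h | h
  · exact sub_eq_zero.mp h
  · exact absurd h (add_pos hsign hRpos).ne'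
end

section
/- Let n ≥ 1 be an integer and let a, E, F, θ, φ be real numbers with a ≠ 0 and sin(θ/2) ≠ 0. If cos(φ + θ/2) = −E·cos(θ/2)/a and sin(φ + θ/2) = ((cos θ − 1)·E + 2^n·F)/(2·a·sin(θ/2)), then in the complex numbers (1 − exp(i·θ))·(a·exp(i·φ) + E)/2^n − F = 0. -/
open Real Complex

/-- Key computation in the proof of Theorem 1 of the paper: the non-target block
amplitude vanishes under the stated angle conditions. -/
theorem stmt_7 (n : ℕ) (hn : 1 ≤ n) (a E F θ φ : ℝ)
    (ha : a ≠ 0) (hs : Real.sin (θ / 2) ≠ 0)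
    (hcos : Real.cos (φ + θ / 2) = -E * Real.cos (θ / 2) / a)
    (hsin : Real.sin (φ + θ / 2) =
      ((Real.cos θ - 1) * E + 2 ^ n * F) / (2 * a * Real.sin (θ / 2))) :
    (1 - Complex.exp (Complex.I * θ)) * ((a : ℂ) * Complex.exp (Complex.I * φ) + (E : ℂ)) /
        (2 : ℂ) ^ n - (F : ℂ) = 0 := by
  set s := Real.sin (θ/2) with hsdef
  set c := Real.cos (θ/2) with hcdef
  have hθ : θ = θ/2 + θ/2 := by ring
  have hct : Real.cos θ = c*c - s*s := by rw [hθ, Real.cos_add]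
  have hst : Real.sin θ = 2*s*c := by rw [hθ, Real.sin_add]; ring
  have hp : s^2 + c^2 = 1 := Real.sin_sq_add_cos_sq _
  rw [Real.cos_add] at hcos
  rw [Real.sin_add, hct] at hsin
  have h1 : a * (Real.cos φ * c - Real.sin φ * s) = -E * c := by
    field_simp at hcos; linarith [hcos]
  have h2 : 2*a*s*(Real.sin φ * c + Real.cos φ * s) = (c*c - s*s - 1)*E + 2^n * F := by
    field_simp at hsin; linarith [hsin]
  have he1 : Complex.exp (Complex.I * θ) = (Real.cos θ : ℂ) + (Real.sin θ : ℂ) * Complex.I := by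
    rw [mul_comm, Complex.exp_mul_I]; push_cast; ring
  have he2 : Complex.exp (Complex.I * φ) = (Real.cos φ : ℂ) + (Real.sin φ : ℂ) * Complex.I := by
    rw [mul_comm, Complex.exp_mul_I]; push_cast; ring
  rw [he1, he2, hct, hst, sub_eq_zero, div_eq_iff (pow_ne_zero _ two_ne_zero : (2:ℂ)^n ≠ 0)]
  have H1 : ((a : ℂ) * ((Real.cos φ : ℂ) * c - (Real.sin φ : ℂ) * s) = -(E:ℂ) * c) := by
    exact_mod_cast congrArg (Complex.ofReal) h1
  have H2 : (2*(a:ℂ)*s*((Real.sin φ:ℂ) * c + (Real.cos φ:ℂ) * s)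
      = ((c:ℂ)*c - s*s - 1)*E + 2^n * F) := by
    exact_mod_cast congrArg (Complex.ofReal) h2
  have HP : ((s:ℂ)^2 + (c:ℂ)^2 = 1) := by exact_mod_cast congrArg (Complex.ofReal) hp
  push_cast at H1 H2 HP ⊢
  linear_combination H2 - 2*(s:ℂ)*Complex.I*H1
    - ((a:ℂ)*(Complex.cos φ) + Complex.I*(a:ℂ)*(Complex.sin φ))*HP
    - 2*(c:ℂ)*(s:ℂ)*(a:ℂ)*(Complex.sin φ)*Complex.I_sq
end

section
/- Let 1 ≤ q < n be integers and set N = 2^n, K = 2^q, M = 2^{n-q}. Work in ℂ^N with standard basis indexed by pairs (u,v) ∈ Fin K × Fin M; for u ∈ Fin K the block u is {(u,v) : v ∈ Fin M}. Let φ be the uniform superposition (every coordinate 1/√N) and fix a target (t*,t'). Let U flip the sign of the coordinate at (t*,t') and fix all other basis vectors; let the global Grover iterate be G ψ = 2⟨φ,ψ⟩φ − ψ composed after U; let the local Grover iterate be G₁ = D_loc ∘ U where (D_loc ψ)(u,v) = (2/M)·∑_{v'} ψ(u,v') − ψ(u,v); and for real θ, φ₀ let G_g ψ = (1 − e^{iθ})·⟨φ,ψ⟩·φ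 − ψ composed after the map U^{φ₀} that multiplies the coordinate at (t*,t') by e^{iφ₀} and fixes all other basis vectors. Set λ = arcsin(1/√N), λ' = arcsin(1/√M), and for natural numbers j₁, j₂ define a = sin((2j₁+1)λ)·cos(2j₂λ') + (√(M−1)/√(N−1))·cos((2j₁+1)λ)·sin(2j₂λ'), a' = −sin((2j₁+1)λ)·sin(2j₂λ') + (√(M−1)/√(N−1))·cos((2j₁+1)λ)·cos(2j₂λ'), E' = √(M−1)·a' + (N−M)·cos((2j₁+1)λ)/√(N−1), and F' = cos((2j₁+1)λ)/√(N−1). If a ≠ 0, sin(θ/2) ≠ 0, cos(φ₀ + θ/2) = −E'·cos(θ/2)/a, and sin(φ₀ + θ/2) = ((cos θ − 1)·E' + N·F')/(2·a·sin(θ/2)), then every coordinate of G_g(G₁^{j₂}(G^{j₁} φ)) at an index (u,v) with u ≠ t* equals 0; hence measuring the first register of this (unit-norm) state yields t* with probability 1. -/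
open Real Finset Complex

lemma aux_sum {R : Type*} [CommRing R] {α : Type*} [Fintype α] [DecidableEq α]
    (a : α) (x y : R) :
    ∑ i, (if i = a then x else y) = x - y + (Fintype.card α : R) * y := by
  have h : ∀ i : α, (if i = a then x else y) = (if i = a then x - y else 0) + y := by
    intro i; by_cases h : i = a <;> simp [h]
  simp only [h, Finset.sum_add_distrib, Finset.sum_ite_eq' Finset.univ a (fun _ => x - y)]
  simp [mul_comm]

lemma rot_step (M lam' : ℝ) (hM : 2 ≤ M) (hsin : Real.sin lam' = 1 / Real.sqrt M)
    (hcos : Real.cos lam' = Real.sqrt (M - 1) / Real.sqrt M) (P Q b : ℝ) :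
    ((1 - 2/M) * (P * Real.cos b + Q * Real.sin b)
      + (2*(M-1)/M) * ((-(P * Real.sin b) + Q * Real.cos b)/Real.sqrt (M-1))
      = P * Real.cos (b + 2*lam') + Q * Real.sin (b + 2*lam'))
    ∧ (-(2/M) * (P * Real.cos b + Q * Real.sin b)
      + ((M-2)/M) * ((-(P*Real.sin b) + Q * Real.cos b)/Real.sqrt (M-1))
      = (-(P * Real.sin (b + 2*lam')) + Q * Real.cos (b + 2*lam'))/Real.sqrt (M-1)) := by
  have hM0 : (0:ℝ) < M := by linarith
  have hM1 : (0:ℝ) < M - 1 := by linarith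
  have hsM : Real.sqrt M * Real.sqrt M = M := Real.mul_self_sqrt hM0.le
  have hsM1 : Real.sqrt (M-1) * Real.sqrt (M-1) = M - 1 := Real.mul_self_sqrt hM1.le
  have hsM0 : Real.sqrt M ≠ 0 := by positivity
  have hsM10 : Real.sqrt (M-1) ≠ 0 := by positivity
  have hsq : Real.sqrt (M-1) ^ 2 = M - 1 := Real.sq_sqrt hM1.le
  have hc2 : Real.cos (2*lam') = 1 - 2/M := by
    rw [Real.cos_two_mul, hcos]; field_simp; rw [Real.sq_sqrt hM1.le, Real.sq_sqrt hM0.le]; ring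
  have hs2 : Real.sin (2*lam') = 2 * Real.sqrt (M-1) / M := by
    rw [Real.sin_two_mul, hsin, hcos]; field_simp; rw [Real.sq_sqrt hM0.le]
  constructor
  · rw [Real.cos_add, Real.sin_add, hc2, hs2]
    field_simp
    ring_nf
    rw [show Real.sqrt (-1+M) ^ 2 = -1 + M by
      rw [show (-1+M : ℝ) = M - 1 by ring]; linarith [hsq]]
    ring
  · rw [Real.cos_add, Real.sin_add, hc2, hs2]
    field_simp
    ring_nf

set_option maxHeartbeats 2000000 in
/-- Theorem 1 of the paper: the exact quantum partial search algorithm outputs the first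
q bits of the unique marked item with probability 1 when the phases θ, φ₀ of the final
generalized Grover operator satisfy the stated conditions. -/
theorem stmt_8 (n q : ℕ) (hq : 1 ≤ q) (hqn : q < n)
    (N K M : ℕ) (hN : N = 2 ^ n) (hK : K = 2 ^ q) (hM : M = 2 ^ (n - q))
    -- the uniform superposition
    (φ : Fin K × Fin M → ℂ) (hφ : ∀ i, φ i = ((1 / Real.sqrt N : ℝ) : ℂ))
    -- the target
    (tstar : Fin K) (t' : Fin M)
    -- the sign-flip oracle
    (U : (Fin K × Fin M → ℂ) → (Fin K × Fin M → ℂ))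
    (hU : ∀ ψ i, U ψ i = if i = (tstar, t') then -ψ i else ψ i)
    -- the global Grover iterate  G ψ = 2⟨φ, U ψ⟩φ − U ψ
    (G : (Fin K × Fin M → ℂ) → (Fin K × Fin M → ℂ))
    (hG : ∀ ψ i, G ψ i = 2 * (∑ j, (starRingEnd ℂ) (φ j) * U ψ j) * φ i - U ψ i)
    -- the local Grover iterate  G₁ = D_loc ∘ U
    (G₁ : (Fin K × Fin M → ℂ) → (Fin K × Fin M → ℂ))
    (hG₁ : ∀ ψ u v, G₁ ψ (u, v) = (2 / (M : ℂ)) * (∑ v' : Fin M, U ψ (u, v')) - U ψ (u, v))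
    -- phases of the final generalized Grover operator
    (θ φ₀ : ℝ)
    -- the phase oracle U^{φ₀}
    (Uφ₀ : (Fin K × Fin M → ℂ) → (Fin K × Fin M → ℂ))
    (hUφ₀ : ∀ ψ i, Uφ₀ ψ i =
      if i = (tstar, t') then Complex.exp (Complex.I * φ₀) * ψ i else ψ i)
    -- the generalized global Grover iterate  G_g ψ = (1 − e^{iθ})⟨φ, U^{φ₀}ψ⟩φ − U^{φ₀}ψ
    (Gg : (Fin K × Fin M → ℂ) → (Fin K × Fin M → ℂ))
    (hGg : ∀ ψ i, Gg ψ i =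
      (1 - Complex.exp (Complex.I * θ)) * (∑ j, (starRingEnd ℂ) (φ j) * Uφ₀ ψ j) * φ i -
        Uφ₀ ψ i)
    -- the angles
    (lam lam' : ℝ)
    (hlam : lam = Real.arcsin (1 / Real.sqrt N))
    (hlam' : lam' = Real.arcsin (1 / Real.sqrt M))
    (j₁ j₂ : ℕ)
    -- the amplitudes and derived quantities
    (a a' E' F' : ℝ)
    (ha : a = Real.sin ((2 * j₁ + 1) * lam) * Real.cos (2 * j₂ * lam') +
        Real.sqrt ((M : ℝ) - 1) / Real.sqrt ((N : ℝ) - 1) *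
          Real.cos ((2 * j₁ + 1) * lam) * Real.sin (2 * j₂ * lam'))
    (ha' : a' = -(Real.sin ((2 * j₁ + 1) * lam) * Real.sin (2 * j₂ * lam')) +
        Real.sqrt ((M : ℝ) - 1) / Real.sqrt ((N : ℝ) - 1) *
          Real.cos ((2 * j₁ + 1) * lam) * Real.cos (2 * j₂ * lam'))
    (hE' : E' = Real.sqrt ((M : ℝ) - 1) * a' +
        ((N : ℝ) - M) * Real.cos ((2 * j₁ + 1) * lam) / Real.sqrt ((N : ℝ) - 1))
    (hF' : F' = Real.cos ((2 * j₁ + 1) * lam) / Real.sqrt ((N : ℝ) - 1))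
    -- the exactness conditions on the phases
    (ha0 : a ≠ 0) (hs0 : Real.sin (θ / 2) ≠ 0)
    (hcos : Real.cos (φ₀ + θ / 2) = -E' * Real.cos (θ / 2) / a)
    (hsin : Real.sin (φ₀ + θ / 2) =
      ((Real.cos θ - 1) * E' + N * F') / (2 * a * Real.sin (θ / 2))) :
    (∀ (u : Fin K) (v : Fin M), u ≠ tstar → Gg (G₁^[j₂] (G^[j₁] φ)) (u, v) = 0) ∧
    ∑ v : Fin M, ‖Gg (G₁^[j₂] (G^[j₁] φ)) (tstar, v)‖ ^ 2 = 1 := by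
  -- numeric facts
  have hn2 : 2 ≤ n := by omega
  have hnq1 : 1 ≤ n - q := by omega
  have hNKM : K * M = N := by rw [hN, hK, hM, ← pow_add]; congr 1; omega
  have hN4 : (4:ℝ) ≤ (N:ℝ) := by
    have h4 : (4:ℕ) ≤ N := by
      rw [hN]
      have : (2:ℕ)^2 ≤ 2^n := Nat.pow_le_pow_right (by norm_num) hn2
      simpa using this
    exact_mod_cast h4
  have hM2 : (2:ℝ) ≤ (M:ℝ) := by
    have h2 : (2:ℕ) ≤ M := by
      rw [hM]
      have : (2:ℕ)^1 ≤ 2^(n-q) := Nat.pow_le_pow_right (by norm_num) hnq1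
      simpa using this
    exact_mod_cast h2
  have hN0 : (0:ℝ) < (N:ℝ) := by linarith
  have hN1 : (0:ℝ) < (N:ℝ) - 1 := by linarith
  have hM0 : (0:ℝ) < (M:ℝ) := by linarith
  have hM1 : (0:ℝ) < (M:ℝ) - 1 := by linarith
  have hsN : Real.sqrt N * Real.sqrt N = (N:ℝ) := Real.mul_self_sqrt hN0.le
  have hsN1 : Real.sqrt ((N:ℝ)-1) * Real.sqrt ((N:ℝ)-1) = (N:ℝ) - 1 := Real.mul_self_sqrt hN1.le
  have hsM1 : Real.sqrt ((M:ℝ)-1) * Real.sqrt ((M:ℝ)-1) = (M:ℝ) - 1 := Real.mul_self_sqrt hM1.le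
  have hsN0 : Real.sqrt (N:ℝ) ≠ 0 := by positivity
  have hsN10 : Real.sqrt ((N:ℝ)-1) ≠ 0 := by positivity
  have hsM10 : Real.sqrt ((M:ℝ)-1) ≠ 0 := by positivity
  -- sin and cos of lam, lam'
  have hone : (1:ℝ)/Real.sqrt N ≤ 1 := by
    rw [div_le_one (by positivity)]
    nlinarith [hsN, Real.sqrt_nonneg (N:ℝ)]
  have hneg : (-1:ℝ) ≤ 1/Real.sqrt N := by
    have : (0:ℝ) ≤ 1/Real.sqrt N := by positivity
    linarith
  have hsinlam : Real.sin lam = 1 / Real.sqrt N := by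
    rw [hlam, Real.sin_arcsin hneg hone]
  have hcoslam : Real.cos lam = Real.sqrt ((N:ℝ)-1) / Real.sqrt N := by
    rw [hlam, Real.cos_arcsin]
    rw [div_pow, one_pow, Real.sq_sqrt hN0.le]
    rw [show (1 - 1/(N:ℝ)) = ((N:ℝ)-1)/N by field_simp]
    rw [Real.sqrt_div hN1.le]
  have honeM : (1:ℝ)/Real.sqrt M ≤ 1 := by
    rw [div_le_one (by positivity)]
    nlinarith [Real.mul_self_sqrt hM0.le, Real.sqrt_nonneg (M:ℝ)]
  have hnegM : (-1:ℝ) ≤ 1/Real.sqrt M := by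
    have : (0:ℝ) ≤ 1/Real.sqrt M := by positivity
    linarith
  have hsinlam' : Real.sin lam' = 1 / Real.sqrt M := by
    rw [hlam', Real.sin_arcsin hnegM honeM]
  have hcoslam' : Real.cos lam' = Real.sqrt ((M:ℝ)-1) / Real.sqrt M := by
    rw [hlam', Real.cos_arcsin]
    rw [div_pow, one_pow, Real.sq_sqrt hM0.le]
    rw [show (1 - 1/(M:ℝ)) = ((M:ℝ)-1)/M by field_simp]
    rw [Real.sqrt_div hM1.le]
  have hNC : ((N:ℂ)) ≠ 0 := by exact_mod_cast hN0.ne'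
  have hMC : ((M:ℂ)) ≠ 0 := by exact_mod_cast hM0.ne'
  have hcard : ((Fintype.card (Fin K × Fin M) : ℕ) : ℂ) = (N:ℂ) := by
    simp [hNKM]
  have hsNC : ((Real.sqrt N : ℝ) : ℂ) * ((Real.sqrt N : ℝ) : ℂ) = (N:ℂ) := by
    exact_mod_cast congrArg (fun t : ℝ => (t:ℂ)) hsN
  -- one step of the global Grover iterate on a symmetric state
  have stepG : ∀ (ψ : Fin K × Fin M → ℂ) (x y : ℝ),
      (∀ i, ψ i = if i = (tstar, t') then (x:ℂ) else (y:ℂ)) →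
      (∀ i, G ψ i = if i = (tstar, t') then
          (((1 - 2/(N:ℝ))*x + 2*((N:ℝ)-1)/N*y : ℝ) : ℂ)
        else ((-(2/(N:ℝ))*x + ((N:ℝ)-2)/N*y : ℝ) : ℂ)) := by
    intro ψ x y hψ i
    have hU' : ∀ j, U ψ j = if j = (tstar,t') then -(x:ℂ) else (y:ℂ) := by
      intro j; rw [hU, hψ]; by_cases h : j = (tstar,t') <;> simp [h]
    have hsum : ∑ j, (starRingEnd ℂ) (φ j) * U ψ j
        = ((1/Real.sqrt N : ℝ):ℂ) * ((-(x:ℂ)) - y + (N:ℂ)*y) := by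
      calc ∑ j, (starRingEnd ℂ) (φ j) * U ψ j
          = ∑ j : Fin K × Fin M, ((1/Real.sqrt N : ℝ):ℂ) *
              (if j = (tstar,t') then -(x:ℂ) else (y:ℂ)) := by
            apply Finset.sum_congr rfl; intro j _; rw [hφ, hU', Complex.conj_ofReal]
        _ = ((1/Real.sqrt N : ℝ):ℂ) * ((-(x:ℂ)) - y + (N:ℂ)*y) := by
            rw [← Finset.mul_sum, aux_sum (tstar,t') (-(x:ℂ)) (y:ℂ), hcard]
    rw [hG, hsum, hU', hφ]
    have hcol : ∀ T : ℂ, (2:ℂ) * (((1/Real.sqrt N : ℝ):ℂ) * T) *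
        ((1/Real.sqrt N : ℝ):ℂ) = (2/(N:ℂ)) * T := by
      intro T
      have h1 : ((1/Real.sqrt N : ℝ):ℂ) = (((Real.sqrt N:ℝ):ℂ))⁻¹ := by
        push_cast; ring
      rw [h1, show (2:ℂ) * ((((Real.sqrt N:ℝ):ℂ))⁻¹ * T) * (((Real.sqrt N:ℝ):ℂ))⁻¹
          = 2 * T * (((Real.sqrt N:ℝ):ℂ) * ((Real.sqrt N:ℝ):ℂ))⁻¹ by ring, hsNC]
      ring
    by_cases h : i = (tstar, t') <;> simp only [h, if_true, if_false] <;> rw [hcol _] <;>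
      push_cast <;> field_simp <;> ring
  -- closed form for the global iterations
  have key1 : ∀ j : ℕ, ∀ i, (G^[j] φ) i = if i = (tstar,t') then
      ((Real.sin lam * Real.cos (2*(j:ℝ)*lam) + Real.cos lam * Real.sin (2*(j:ℝ)*lam) : ℝ):ℂ)
    else (((-(Real.sin lam * Real.sin (2*(j:ℝ)*lam)) + Real.cos lam * Real.cos (2*(j:ℝ)*lam))
        / Real.sqrt ((N:ℝ)-1) : ℝ):ℂ) := by
    intro j
    induction j with
    | zero =>
      intro i
      rw [Function.iterate_zero_apply, hφ]
      by_cases h : i = (tstar,t') <;> simp only [h, if_true, if_false, Nat.cast_zero] <;>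
        rw [Complex.ofReal_inj]
      · rw [show (2*(0:ℝ)*lam) = 0 by ring, Real.cos_zero, Real.sin_zero, hsinlam]
        ring
      · rw [show (2*(0:ℝ)*lam) = 0 by ring]
        rw [Real.cos_zero, Real.sin_zero, hcoslam]
        field_simp
        ring
    | succ j ih =>
      intro i
      rw [Function.iterate_succ_apply', stepG _ _ _ ih i]
      have e1 := (rot_step N lam (by linarith) hsinlam hcoslam
        (Real.sin lam) (Real.cos lam) (2*(j:ℝ)*lam)).1
      have e2 := (rot_step N lam (by linarith) hsinlam hcoslam
        (Real.sin lam) (Real.cos lam) (2*(j:ℝ)*lam)).2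
      have harg : 2*(((j:ℕ)+1:ℕ):ℝ)*lam = 2*(j:ℝ)*lam + 2*lam := by push_cast; ring
      by_cases h : i = (tstar,t') <;> simp only [h, if_true, if_false] <;>
        rw [Complex.ofReal_inj, harg]
      · linear_combination e1
      · linear_combination e2
  -- one step of the local Grover iterate on a block-symmetric state
  have stepG1 : ∀ (ψ : Fin K × Fin M → ℂ) (x y z : ℝ),
      (∀ i, ψ i = if i = (tstar, t') then (x:ℂ) else if i.1 = tstar then (y:ℂ) else (z:ℂ)) →
      (∀ i, G₁ ψ i = if i = (tstar, t') then
          (((1 - 2/(M:ℝ))*x + 2*((M:ℝ)-1)/M*y : ℝ) : ℂ)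
        else if i.1 = tstar then ((-(2/(M:ℝ))*x + ((M:ℝ)-2)/M*y : ℝ) : ℂ)
        else (z:ℂ)) := by
    intro ψ x y z hψ i
    obtain ⟨u, v⟩ := i
    have hU' : ∀ j, U ψ j = if j = (tstar,t') then -(x:ℂ)
        else if j.1 = tstar then (y:ℂ) else (z:ℂ) := by
      intro j; rw [hU, hψ]; by_cases h : j = (tstar,t') <;> simp [h]
    rw [hG₁]
    by_cases hu : u = tstar
    · have hsum : (∑ v' : Fin M, U ψ (u, v')) = (-(x:ℂ)) - y + (M:ℂ)*y := by
        have hterm : ∀ v' : Fin M, U ψ (u,v') =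
            if v' = t' then -(x:ℂ) else (y:ℂ) := by
          intro v'; rw [hU']
          by_cases h : v' = t' <;> simp [h, Prod.ext_iff, hu]
        simp only [hterm]
        rw [aux_sum t' (-(x:ℂ)) (y:ℂ), Fintype.card_fin]
      rw [hsum, hU']
      by_cases hv : v = t' <;>
        simp only [Prod.mk.injEq, hu, hv, true_and, and_self, if_true, if_false,
          not_false_iff, and_true, if_neg, ite_true, ite_false] <;>
        push_cast <;> field_simp <;> ring
    · have hsum : (∑ v' : Fin M, U ψ (u, v')) = (M:ℂ)*z := by
        have hterm : ∀ v' : Fin M, U ψ (u,v') = (z:ℂ) := by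
          intro v'; rw [hU']
          simp [Prod.ext_iff, hu]
        simp only [hterm, Finset.sum_const, Fintype.card_fin, Finset.card_univ]
        simp [mul_comm]
      rw [hsum, hU']
      simp only [Prod.mk.injEq, hu, false_and, if_false]
      field_simp
      ring
  -- abbreviations for the state after the global phase
  set b1 : ℝ := 2*(j₁:ℝ)*lam with hb1
  set P2 : ℝ := Real.sin lam * Real.cos b1 + Real.cos lam * Real.sin b1 with hP2
  set z0 : ℝ := (-(Real.sin lam * Real.sin b1) + Real.cos lam * Real.cos b1)
      / Real.sqrt ((N:ℝ)-1) with hz0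
  set Q2 : ℝ := Real.sqrt ((M:ℝ)-1) * z0 with hQ2
  -- closed form for the local iterations
  have key2 : ∀ j : ℕ, ∀ i, (G₁^[j] (G^[j₁] φ)) i = if i = (tstar,t') then
      ((P2 * Real.cos (2*(j:ℝ)*lam') + Q2 * Real.sin (2*(j:ℝ)*lam') : ℝ):ℂ)
    else if i.1 = tstar then
      (((-(P2 * Real.sin (2*(j:ℝ)*lam')) + Q2 * Real.cos (2*(j:ℝ)*lam'))
        / Real.sqrt ((M:ℝ)-1) : ℝ):ℂ)
    else ((z0 : ℝ):ℂ) := by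
    intro j
    induction j with
    | zero =>
      intro i
      rw [Function.iterate_zero_apply, key1 j₁ i]
      by_cases h : i = (tstar,t')
      · simp only [h, if_true, Nat.cast_zero, ite_true]
        rw [Complex.ofReal_inj, show (2*(0:ℝ)*lam') = 0 by ring, Real.cos_zero,
          Real.sin_zero]
        ring
      · simp only [h, if_false, Nat.cast_zero, ite_false]
        by_cases h2 : i.1 = tstar <;> simp only [h2, if_true, if_false, ite_true, ite_false] <;>
          rw [Complex.ofReal_inj]
        · rw [show (2*(0:ℝ)*lam') = 0 by ring, Real.cos_zero, Real.sin_zero, hQ2]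
          field_simp
          rw [hz0]
          field_simp
          rw [hb1]; ring
    | succ j ih =>
      intro i
      rw [Function.iterate_succ_apply', stepG1 _ _ _ _ ih i]
      have e1 := (rot_step M lam' hM2 hsinlam' hcoslam' P2 Q2 (2*(j:ℝ)*lam')).1
      have e2 := (rot_step M lam' hM2 hsinlam' hcoslam' P2 Q2 (2*(j:ℝ)*lam')).2
      have harg : 2*(((j:ℕ)+1:ℕ):ℝ)*lam' = 2*(j:ℝ)*lam' + 2*lam' := by push_cast; ring
      by_cases h : i = (tstar,t')
      · simp only [h, if_true, ite_true]
        rw [Complex.ofReal_inj, harg]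
        linear_combination e1
      · by_cases h2 : i.1 = tstar <;>
          simp only [h, h2, if_true, if_false, ite_true, ite_false]
        rw [Complex.ofReal_inj, harg]
        linear_combination e2
  -- connect the closed form with a, a', F'
  have hsb : Real.sin ((2*(j₁:ℝ)+1)*lam) = P2 := by
    rw [hP2, ← Real.sin_add]; congr 1; rw [hb1]; ring
  have hcb : Real.cos ((2*(j₁:ℝ)+1)*lam) = Real.sqrt ((N:ℝ)-1) * z0 := by
    rw [hz0, mul_div_cancel₀ _ hsN10,
      show -(Real.sin lam * Real.sin b1) + Real.cos lam * Real.cos b1 = Real.cos (lam + b1) by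
        rw [Real.cos_add]; ring]
    congr 1; rw [hb1]; ring
  have haA : a = P2 * Real.cos (2*(j₂:ℝ)*lam') + Q2 * Real.sin (2*(j₂:ℝ)*lam') := by
    rw [ha, hsb, hcb, hQ2]; field_simp
  have ha'A : a' = -(P2 * Real.sin (2*(j₂:ℝ)*lam')) + Q2 * Real.cos (2*(j₂:ℝ)*lam') := by
    rw [ha', hsb, hcb, hQ2]; field_simp
  have hF'z : F' = z0 := by
    rw [hF', hcb]; field_simp
  have hE2 : E' = Real.sqrt ((M:ℝ)-1) * a' + ((N:ℝ)-M)*F' := by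
    rw [hE', hF', hcb]; field_simp
  have hform : ∀ i, (G₁^[j₂] (G^[j₁] φ)) i = if i = (tstar,t') then ((a:ℝ):ℂ)
      else if i.1 = tstar then ((a'/Real.sqrt ((M:ℝ)-1) : ℝ):ℂ)
      else ((F':ℝ):ℂ) := by
    intro i
    rw [key2 j₂ i, haA, ha'A, hF'z]
  have hU2 : ∀ i, Uφ₀ (G₁^[j₂] (G^[j₁] φ)) i = if i = (tstar,t') then
      Complex.exp (Complex.I*(φ₀:ℂ)) * ((a:ℝ):ℂ)
      else if i.1 = tstar then ((a'/Real.sqrt ((M:ℝ)-1) : ℝ):ℂ)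
      else ((F':ℝ):ℂ) := by
    intro i
    rw [hUφ₀, hform]
    by_cases h : i = (tstar,t') <;> simp [h]
  have hKM : (K:ℝ)*(M:ℝ) = (N:ℝ) := by exact_mod_cast congrArg (Nat.cast (R := ℝ)) hNKM
  set ya : ℝ := a'/Real.sqrt ((M:ℝ)-1) with hya
  have ha'w : a' = Real.sqrt ((M:ℝ)-1) * ya := by rw [hya]; field_simp
  -- the inner sums of the final operator
  have hinner : ∀ u : Fin K, (∑ v : Fin M, Uφ₀ (G₁^[j₂] (G^[j₁] φ)) (u,v)) =
      if u = tstar then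
        Complex.exp (Complex.I*(φ₀:ℂ)) * ((a:ℝ):ℂ) - ((ya:ℝ):ℂ) + (M:ℂ)*((ya:ℝ):ℂ)
      else (M:ℂ)*((F':ℝ):ℂ) := by
    intro u
    by_cases hu : u = tstar
    · rw [if_pos hu]
      have hterm : ∀ v : Fin M, Uφ₀ (G₁^[j₂] (G^[j₁] φ)) (u,v) =
          if v = t' then Complex.exp (Complex.I*(φ₀:ℂ)) * ((a:ℝ):ℂ) else ((ya:ℝ):ℂ) := by
        intro v; rw [hU2]
        by_cases hv : v = t' <;> simp [hv, hu, Prod.ext_iff, hya]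
      simp only [hterm]
      rw [aux_sum t' _ _, Fintype.card_fin]
    · rw [if_neg hu]
      have hterm : ∀ v : Fin M, Uφ₀ (G₁^[j₂] (G^[j₁] φ)) (u,v) = ((F':ℝ):ℂ) := by
        intro v; rw [hU2]; simp [Prod.ext_iff, hu]
      simp only [hterm, Finset.sum_const, Finset.card_univ, Fintype.card_fin]
      simp [mul_comm]
  -- the total sum
  have hEE : -ya + (M:ℝ)*ya - (M:ℝ)*F' + (K:ℝ)*((M:ℝ)*F') = E' := by
    rw [hE2, ha'w, ← hKM]
    have : Real.sqrt ((M:ℝ)-1) * (Real.sqrt ((M:ℝ)-1) * ya) = ((M:ℝ)-1)*ya := by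
      rw [← mul_assoc, hsM1]
    rw [this]; ring
  have hsumT : (∑ j, (starRingEnd ℂ) (φ j) * Uφ₀ (G₁^[j₂] (G^[j₁] φ)) j)
      = ((1/Real.sqrt N : ℝ):ℂ) *
        (Complex.exp (Complex.I*(φ₀:ℂ)) * ((a:ℝ):ℂ) + ((E':ℝ):ℂ)) := by
    calc (∑ j, (starRingEnd ℂ) (φ j) * Uφ₀ (G₁^[j₂] (G^[j₁] φ)) j)
        = ∑ j : Fin K × Fin M, ((1/Real.sqrt N : ℝ):ℂ) * Uφ₀ (G₁^[j₂] (G^[j₁] φ)) j := by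
          apply Finset.sum_congr rfl; intro j _; rw [hφ, Complex.conj_ofReal]
      _ = ((1/Real.sqrt N : ℝ):ℂ) * ∑ j : Fin K × Fin M, Uφ₀ (G₁^[j₂] (G^[j₁] φ)) j := by
          rw [← Finset.mul_sum]
      _ = _ := by
          congr 1
          rw [Fintype.sum_prod_type]
          calc (∑ u : Fin K, ∑ v : Fin M, Uφ₀ (G₁^[j₂] (G^[j₁] φ)) (u,v))
              = ∑ u : Fin K, (if u = tstar then
                  Complex.exp (Complex.I*(φ₀:ℂ)) * ((a:ℝ):ℂ) - ((ya:ℝ):ℂ) + (M:ℂ)*((ya:ℝ):ℂ)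
                else (M:ℂ)*((F':ℝ):ℂ)) := by
                exact Finset.sum_congr rfl (fun u _ => hinner u)
            _ = _ := by
                rw [aux_sum tstar _ _, Fintype.card_fin]
                have hEEC : -((ya:ℝ):ℂ) + (M:ℂ)*((ya:ℝ):ℂ) - (M:ℂ)*((F':ℝ):ℂ)
                    + (K:ℂ)*((M:ℂ)*((F':ℝ):ℂ)) = ((E':ℝ):ℂ) := by
                  have hc := congrArg (fun r : ℝ => (r:ℂ)) hEE
                  push_cast at hc ⊢
                  linear_combination hc
                linear_combination hEEC
  -- the key exactness identity
  have hpy : Real.sin (θ/2)^2 + Real.cos (θ/2)^2 = 1 := Real.sin_sq_add_cos_sq (θ/2)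
  have hct : Real.cos θ = 1 - 2*Real.sin (θ/2)^2 := by
    have h := Real.cos_two_mul (θ/2)
    rw [show 2*(θ/2) = θ by ring] at h
    rw [h]; linarith [hpy]
  have hst : Real.sin θ = 2*Real.sin (θ/2)*Real.cos (θ/2) := by
    have h := Real.sin_two_mul (θ/2)
    rw [show 2*(θ/2) = θ by ring] at h
    rw [h]
  have hca : a * (Real.cos φ₀ * Real.cos (θ/2) - Real.sin φ₀ * Real.sin (θ/2))
      = -E' * Real.cos (θ/2) := by
    have h := hcos; rw [Real.cos_add] at h; rw [h]; field_simp
  have hsa : (2*a*Real.sin (θ/2)) * (Real.sin φ₀ * Real.cos (θ/2) + Real.cos φ₀ * Real.sin (θ/2))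
      = (Real.cos θ - 1)*E' + (N:ℝ)*F' := by
    have h := hsin; rw [Real.sin_add] at h; rw [h]; field_simp
  have hreal : (1 - Real.cos θ)*(a*Real.cos φ₀ + E') + Real.sin θ*(a*Real.sin φ₀)
      = (N:ℝ)*F' := by
    rw [hct] at hsa
    rw [hct, hst]
    linear_combination hsa
  have himag : -(Real.sin θ)*(a*Real.cos φ₀ + E') + (1 - Real.cos θ)*(a*Real.sin φ₀) = 0 := by
    rw [hct, hst]
    linear_combination (-2*Real.sin (θ/2))*hca
  have hX2 : 2*(a*Real.cos φ₀ + E') = (N:ℝ)*F' := by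
    rw [hct, hst] at hreal himag
    apply mul_left_cancel₀ hs0
    linear_combination Real.sin (θ/2)*hreal - Real.cos (θ/2)*himag
      - 2*Real.sin (θ/2)*(a*Real.cos φ₀ + E')*hpy
  have hexpθ : Complex.exp (Complex.I*(θ:ℂ)) =
      ((Real.cos θ : ℝ):ℂ) + ((Real.sin θ : ℝ):ℂ)*Complex.I := by
    rw [mul_comm, Complex.exp_mul_I, Complex.ofReal_cos, Complex.ofReal_sin]
  have hexpφ : Complex.exp (Complex.I*(φ₀:ℂ)) =
      ((Real.cos φ₀ : ℝ):ℂ) + ((Real.sin φ₀ : ℝ):ℂ)*Complex.I := by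
    rw [mul_comm, Complex.exp_mul_I, Complex.ofReal_cos, Complex.ofReal_sin]
  have hKey : (1 - Complex.exp (Complex.I*(θ:ℂ))) *
      (Complex.exp (Complex.I*(φ₀:ℂ)) * ((a:ℝ):ℂ) + ((E':ℝ):ℂ)) = (N:ℂ)*((F':ℝ):ℂ) := by
    rw [hexpθ, hexpφ]
    apply Complex.ext
    · simp only [Complex.mul_re, Complex.sub_re, Complex.add_re, Complex.one_re,
        Complex.mul_im, Complex.sub_im, Complex.add_im, Complex.one_im,
        Complex.ofReal_re, Complex.ofReal_im, Complex.I_re, Complex.I_im,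
        Complex.natCast_re, Complex.natCast_im]
      ring_nf
      linear_combination hreal
    · simp only [Complex.mul_re, Complex.sub_re, Complex.add_re, Complex.one_re,
        Complex.mul_im, Complex.sub_im, Complex.add_im, Complex.one_im,
        Complex.ofReal_re, Complex.ofReal_im, Complex.I_re, Complex.I_im,
        Complex.natCast_re, Complex.natCast_im]
      ring_nf
      linear_combination himag
  -- the final state
  have hcol2 : ∀ cc T : ℂ, (cc * (((1/Real.sqrt N : ℝ):ℂ) * T)) * ((1/Real.sqrt N : ℝ):ℂ)
      = cc * T * (1/(N:ℂ)) := by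
    intro cc T
    have h1 : ((1/Real.sqrt N : ℝ):ℂ) = (((Real.sqrt N:ℝ):ℂ))⁻¹ := by push_cast; ring
    rw [h1, show (cc * ((((Real.sqrt N:ℝ):ℂ))⁻¹ * T)) * (((Real.sqrt N:ℝ):ℂ))⁻¹
        = cc * T * (((Real.sqrt N:ℝ):ℂ) * ((Real.sqrt N:ℝ):ℂ))⁻¹ by ring, hsNC]
    ring
  have hGg2 : ∀ i, Gg (G₁^[j₂] (G^[j₁] φ)) i = ((F':ℝ):ℂ) - Uφ₀ (G₁^[j₂] (G^[j₁] φ)) i := by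
    intro i
    rw [hGg, hsumT, hφ, hcol2, hKey]
    congr 1
    field_simp
  -- pythagoras-type identities
  have hbaseP : P2 = Real.sin (lam + b1) := by rw [hP2, Real.sin_add]
  have hbaseZ : Real.sqrt ((N:ℝ)-1) * z0 = Real.cos (lam + b1) := by
    rw [hz0, mul_div_cancel₀ _ hsN10, Real.cos_add]; ring
  have hbase : P2^2 + ((N:ℝ)-1)*z0^2 = 1 := by
    have hp := Real.sin_sq_add_cos_sq (lam + b1)
    rw [← hbaseP, ← hbaseZ] at hp
    linear_combination hp - z0^2*hsN1
  have hpyj : Real.sin (2*(j₂:ℝ)*lam')^2 + Real.cos (2*(j₂:ℝ)*lam')^2 = 1 :=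
    Real.sin_sq_add_cos_sq _
  have hnorm1 : a^2 + a'^2 + ((N:ℝ)-(M:ℝ))*F'^2 = 1 := by
    rw [haA, ha'A, hF'z, hQ2]
    linear_combination (P2^2 + Real.sqrt ((M:ℝ)-1)^2*z0^2)*hpyj + z0^2*hsM1 + hbase
  have hnorm1' : a^2 + ((M:ℝ)-1)*ya^2 + ((N:ℝ)-(M:ℝ))*F'^2 = 1 := by
    rw [ha'w] at hnorm1
    linear_combination hnorm1 - ya^2*hsM1
  have hX3 : 2*(a*Real.cos φ₀ + (((M:ℝ)-1)*ya + ((N:ℝ)-(M:ℝ))*F')) = (N:ℝ)*F' := by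
    rw [hE2, ha'w] at hX2
    linear_combination hX2 - 2*ya*hsM1
  have hpyφ := Real.sin_sq_add_cos_sq φ₀
  constructor
  · intro u v hu
    rw [hGg2, hU2]
    rw [if_neg (by simp [Prod.ext_iff, hu])]
    simp only [hu, if_false, ite_false]
    exact sub_self _
  · have hnormv : ∀ v : Fin M, ‖Gg (G₁^[j₂] (G^[j₁] φ)) (tstar,v)‖^2 =
        if v = t' then ((F' - a*Real.cos φ₀)^2 + (a*Real.sin φ₀)^2) else (F' - ya)^2 := by
      intro v
      rw [hGg2, hU2]
      by_cases hv : v = t'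
      · rw [if_pos (by simp [hv] : ((tstar,v) : Fin K × Fin M) = (tstar,t')), if_pos hv]
        rw [hexpφ, Complex.sq_norm, Complex.normSq_apply]
        simp only [Complex.sub_re, Complex.sub_im, Complex.mul_re, Complex.mul_im,
          Complex.add_re, Complex.add_im, Complex.ofReal_re, Complex.ofReal_im,
          Complex.I_re, Complex.I_im]
        ring
      · rw [if_neg (by simp [Prod.ext_iff, hv]), if_neg hv, if_pos rfl]
        rw [show ((F':ℝ):ℂ) - ((ya:ℝ):ℂ) = ((F' - ya :ℝ):ℂ) by push_cast; ring]
        rw [Complex.norm_real, Real.norm_eq_abs, _root_.sq_abs]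
    calc (∑ v : Fin M, ‖Gg (G₁^[j₂] (G^[j₁] φ)) (tstar,v)‖^2)
        = ∑ v : Fin M, (if v = t'
            then ((F' - a*Real.cos φ₀)^2 + (a*Real.sin φ₀)^2) else (F' - ya)^2) :=
          Finset.sum_congr rfl (fun v _ => hnormv v)
      _ = ((F' - a*Real.cos φ₀)^2 + (a*Real.sin φ₀)^2) - (F' - ya)^2
            + (M:ℝ)*(F' - ya)^2 := by
          rw [aux_sum t' _ _, Fintype.card_fin]
      _ = 1 := by linear_combination a^2*hpyφ + hnorm1' - F'*hX3
end

section
/- Let N ≥ 2 be a natural number. Work in ℂ^N with standard basis (e_x)_{x ∈ Fin N}, let φ = (1/√N)·∑_x e_x, fix a target t ∈ Fin N, let U be the linear map with U e_t = −e_t and U e_x = e_x for x ≠ t, let D ψ = 2⟨φ,ψ⟩φ − ψ, and let G = D ∘ U. Set λ = arcsin(1/√N). Then for every natural number p, G^p φ = sin((2p+1)·λ)·e_t + (cos((2p+1)·λ)/√(N−1))·∑_{x ≠ t} e_x. -/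
open Real Finset

/-- Lemma 2 of the paper: the state after p iterations of the Grover operator applied to
the uniform superposition, when there is a unique marked item t. -/
theorem stmt_9 (N : ℕ) (hN : 2 ≤ N)
    (φ : Fin N → ℂ) (hφ : ∀ x, φ x = (1 / Real.sqrt N : ℝ))
    (t : Fin N)
    (U : (Fin N → ℂ) → (Fin N → ℂ))
    (hU : ∀ ψ x, U ψ x = if x = t then -ψ x else ψ x)
    (D : (Fin N → ℂ) → (Fin N → ℂ))
    (hD : ∀ ψ x, D ψ x = 2 * (∑ y, (starRingEnd ℂ) (φ y) * ψ y) * φ x - ψ x)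
    (G : (Fin N → ℂ) → (Fin N → ℂ)) (hG : G = D ∘ U)
    (lam : ℝ) (hlam : lam = Real.arcsin (1 / Real.sqrt N)) :
    ∀ p : ℕ, ∀ x : Fin N, G^[p] φ x =
      if x = t then ((Real.sin ((2 * p + 1) * lam) : ℝ) : ℂ)
      else ((Real.cos ((2 * p + 1) * lam) / Real.sqrt ((N : ℝ) - 1) : ℝ) : ℂ) := by
  have hN1 : (1:ℝ) < (N:ℝ) := by exact_mod_cast hN.trans_lt' one_lt_two
  have hNpos : (0:ℝ) < (N:ℝ) := by linarith
  set sn := Real.sqrt N with hsn_def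
  set sm := Real.sqrt ((N:ℝ) - 1) with hsm_def
  have hsn : 0 < sn := Real.sqrt_pos.mpr hNpos
  have hsm : 0 < sm := Real.sqrt_pos.mpr (by linarith)
  have hsn2 : sn * sn = N := Real.mul_self_sqrt hNpos.le
  have hsm2 : sm * sm = (N:ℝ) - 1 := Real.mul_self_sqrt (by linarith)
  have hsn1 : 1 ≤ sn := by
    nlinarith [hsn2]
  have hsin : Real.sin lam = 1 / sn := by
    have h01 : (0:ℝ) < 1/sn := by positivity
    rw [hlam, Real.sin_arcsin (by linarith) (div_le_one_of_le₀ hsn1 hsn.le)]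
  have hcos : Real.cos lam = sm / sn := by
    rw [hlam, Real.cos_arcsin]
    have h1 : 1 - (1/sn)^2 = ((N:ℝ) - 1) / (N:ℝ) := by
      field_simp
      nlinarith [hsn2]
    rw [h1, Real.sqrt_div (by linarith) N]
  -- sum lemma
  have hsum : ∀ c d : ℂ, (∑ y : Fin N, (if y = t then c else d)) = c + ((N:ℝ) - 1 : ℝ) * d := by
    intro c d
    classical
    rw [← Finset.add_sum_erase _ _ (Finset.mem_univ t), if_pos rfl]
    congr 1
    rw [Finset.sum_congr rfl (fun y hy => if_neg (Finset.ne_of_mem_erase hy)),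
      Finset.sum_const, Finset.card_erase_of_mem (Finset.mem_univ t), Finset.card_univ,
      Fintype.card_fin, nsmul_eq_mul]
    have : ((N - 1 : ℕ) : ℂ) = ((N:ℝ) - 1 : ℝ) := by
      push_cast [Nat.cast_sub (by omega : 1 ≤ N)]; ring
    rw [this]
  intro p
  induction p with
  | zero =>
    intro x
    simp only [Function.iterate_zero, id_eq, hφ x, Nat.cast_zero]
    split
    · refine Complex.ofReal_inj.mpr ?_
      norm_num [hsin]
    · refine Complex.ofReal_inj.mpr ?_
      norm_num [hcos]
      field_simp
  | succ p ih =>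
    intro x
    have hGapp : ∀ ψ z, G ψ z = 2 * (∑ y, (starRingEnd ℂ) (φ y) * U ψ y) * φ z - U ψ z := by
      intro ψ z
      rw [hG]
      simp only [Function.comp_apply]
      rw [hD]
    rw [Function.iterate_succ_apply', hGapp]
    set A : ℝ := Real.sin ((2 * p + 1) * lam) with hA
    set B : ℝ := Real.cos ((2 * p + 1) * lam) / sm with hB
    have hUval : ∀ y, U (G^[p] φ) y = if y = t then (-A : ℂ) else (B : ℂ) := by
      intro y
      rw [hU, ih y]
      by_cases hy : y = t <;> simp [hy]
    have hS : (∑ y, (starRingEnd ℂ) (φ y) * U (G^[p] φ) y)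
        = (((1/sn) * (-A + ((N:ℝ) - 1) * B) : ℝ) : ℂ) := by
      have : ∀ y, (starRingEnd ℂ) (φ y) * U (G^[p] φ) y
          = ((1/sn : ℝ) : ℂ) * (if y = t then (-A : ℂ) else (B : ℂ)) := by
        intro y
        rw [hφ y, hUval y, Complex.conj_ofReal]
      rw [Finset.sum_congr rfl (fun y _ => this y), ← Finset.mul_sum, hsum]
      push_cast
      ring
    rw [hS, hUval x, hφ x]
    by_cases hx : x = t
    · rw [if_pos hx, if_pos hx]
      have key : 2 * ((1/sn) * (-A + ((N:ℝ) - 1) * B)) * (1/sn) - (-A)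
          = Real.sin ((2 * ((p:ℝ) + 1) + 1) * lam) := by
        have hang : (2 * ((p:ℝ) + 1) + 1) * lam = (2 * (p:ℝ) + 1) * lam + 2 * lam := by ring
        have hc : Real.cos ((2 * (p:ℝ) + 1) * lam) = B * sm := by
          rw [hB]; field_simp
        rw [hang, Real.sin_add, Real.sin_two_mul, Real.cos_two_mul, hsin, hcos, hc, ← hA]
        have h1 := hsn.ne'
        have h2 := hsm.ne'
        clear_value A B
        field_simp
        linear_combination (2*A) * hsn2 - (2*A+2*B) * hsm2
      have keyC := congrArg (fun r : ℝ => (r : ℂ)) key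
      push_cast at keyC ⊢
      linear_combination keyC
    · rw [if_neg hx, if_neg hx]
      have key : 2 * ((1/sn) * (-A + ((N:ℝ) - 1) * B)) * (1/sn) - B
          = Real.cos ((2 * ((p:ℝ) + 1) + 1) * lam) / sm := by
        have hang : (2 * ((p:ℝ) + 1) + 1) * lam = (2 * (p:ℝ) + 1) * lam + 2 * lam := by ring
        have hc : Real.cos ((2 * (p:ℝ) + 1) * lam) = B * sm := by
          rw [hB]; field_simp
        rw [hang, Real.cos_add, Real.sin_two_mul, Real.cos_two_mul, hsin, hcos, hc, ← hA]
        have h1 := hsn.ne'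
        have h2 := hsm.ne'
        clear_value A B
        field_simp
        linear_combination (-(2*B)) * hsm2
      have keyC := congrArg (fun r : ℝ => (r : ℂ)) key
      push_cast at keyC ⊢
      linear_combination keyC
end

section
/- Let N ≥ 2 be a natural number. Work in ℂ^N with standard basis (e_x)_{x ∈ Fin N}, let φ = (1/√N)·∑_x e_x, fix a target t ∈ Fin N, let U be the linear map with U e_t = −e_t and U e_x = e_x for x ≠ t, let D ψ = 2⟨φ,ψ⟩φ − ψ, and let G = D ∘ U. Set λ = arcsin(1/√N) and define ψ± = (1/√2)·e_t ± (i/√2)·(1/√(N−1))·∑_{x ≠ t} e_x. Then G ψ⁺ = exp(2iλ)·ψ⁺ and G ψ⁻ = exp(−2iλ)·ψ⁻. -/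
open Real Finset Complex

lemma grover_aux1 (a b c j : ℂ) (ha : a ≠ 0) (hb : b ≠ 0) (hc : c ≠ 0) :
    2 * (1/a * -(1/b) + c^2 * (1/a * (j * (1/b) * (1/c)))) * (1/a) - -(1/b)
      = ((a^2 - 2)/a^2 + 2*c/a^2 * j) * (1/b) := by
  have hD : a * b * (a * (b * c)) * a ≠ 0 := by simp [ha, hb, hc]
  field_simp
  ring

lemma grover_aux2 (a b c j : ℂ) (ha : a ≠ 0) (hb : b ≠ 0) (hc : c ≠ 0)
    (hc2 : c^2 = a^2 - 1) (hj : j^2 = -1) :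
    2 * (1/a * -(1/b) + c^2 * (1/a * (j * (1/b) * (1/c)))) * (1/a) - j * (1/b) * (1/c)
      = ((a^2 - 2)/a^2 + 2*c/a^2 * j) * (j * (1/b) * (1/c)) := by
  have hD : a * b * (a * (b * c)) * a ≠ 0 := by simp [ha, hb, hc]
  field_simp
  linear_combination (2*j) * hc2 + (-(2*c)) * hj

/-- Eigenvalue–eigenvector computation for the Grover iterate (Appendix E of the paper). -/
theorem stmt_10 (N : ℕ) (hN : 2 ≤ N)
    (φ : Fin N → ℂ) (hφ : ∀ x, φ x = (1 / Real.sqrt N : ℝ))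
    (t : Fin N)
    (U : (Fin N → ℂ) → (Fin N → ℂ))
    (hU : ∀ ψ x, U ψ x = if x = t then -ψ x else ψ x)
    (D : (Fin N → ℂ) → (Fin N → ℂ))
    (hD : ∀ ψ x, D ψ x = 2 * (∑ y, (starRingEnd ℂ) (φ y) * ψ y) * φ x - ψ x)
    (G : (Fin N → ℂ) → (Fin N → ℂ)) (hG : G = D ∘ U)
    (lam : ℝ) (hlam : lam = Real.arcsin (1 / Real.sqrt N))
    (ψp ψm : Fin N → ℂ)
    (hψp : ∀ x, ψp x = if x = t then ((1 / Real.sqrt 2 : ℝ) : ℂ)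
      else Complex.I * (1 / Real.sqrt 2 : ℝ) * (1 / Real.sqrt ((N : ℝ) - 1) : ℝ))
    (hψm : ∀ x, ψm x = if x = t then ((1 / Real.sqrt 2 : ℝ) : ℂ)
      else -(Complex.I * (1 / Real.sqrt 2 : ℝ) * (1 / Real.sqrt ((N : ℝ) - 1) : ℝ))) :
    (∀ x, G ψp x = Complex.exp (2 * Complex.I * lam) * ψp x) ∧
    (∀ x, G ψm x = Complex.exp (-(2 * Complex.I * lam)) * ψm x) := by
  have hN1 : (1:ℝ) ≤ (N:ℝ) := by exact_mod_cast Nat.one_le_of_lt hN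
  have hN2 : (2:ℝ) ≤ (N:ℝ) := by exact_mod_cast hN
  have hNpos : (0:ℝ) < (N:ℝ) := by linarith
  set sn := Real.sqrt N with hsn
  set s1 := Real.sqrt ((N:ℝ) - 1) with hs1
  set s2 := Real.sqrt 2 with hs2
  have hsnpos : 0 < sn := Real.sqrt_pos.2 hNpos
  have hsn2 : sn ^ 2 = N := Real.sq_sqrt (le_of_lt hNpos)
  have hs12 : s1 ^ 2 = (N:ℝ) - 1 := Real.sq_sqrt (by linarith)
  have hs22 : s2 ^ 2 = 2 := Real.sq_sqrt (by norm_num)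
  have hs1posR : 0 < s1 := Real.sqrt_pos.2 (by linarith)
  have hs2pos : 0 < s2 := Real.sqrt_pos.2 (by norm_num)
  have hle : 1 / sn ≤ 1 := by
    rw [div_le_one hsnpos]
    nlinarith [hsn2]
  have hsin : Real.sin lam = 1 / sn := by
    rw [hlam, Real.sin_arcsin (by have := one_div_pos.2 hsnpos; linarith) hle]
  have hcos : Real.cos lam = s1 / sn := by
    rw [hlam, Real.cos_arcsin]
    rw [div_pow, one_pow, hsn2, hs1, ← Real.sqrt_div (by linarith)]
    congr 1
    field_simp
  have hexpp : Complex.exp (2 * Complex.I * lam) =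
      ((Real.cos (2*lam) : ℝ) : ℂ) + ((Real.sin (2*lam) : ℝ) : ℂ) * Complex.I := by
    have h : (2 * Complex.I * lam) = ((2*lam : ℝ) : ℂ) * Complex.I := by push_cast; ring
    rw [h, Complex.exp_mul_I, Complex.ofReal_cos, Complex.ofReal_sin]
  have hexpm : Complex.exp (-(2 * Complex.I * lam)) =
      ((Real.cos (2*lam) : ℝ) : ℂ) + ((Real.sin (2*lam) : ℝ) : ℂ) * -Complex.I := by
    have h : (-(2 * Complex.I * lam)) = ((-(2*lam) : ℝ) : ℂ) * Complex.I := by push_cast; ring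
    rw [h, Complex.exp_mul_I]
    rw [show ((-(2*lam):ℝ):ℂ) = -((2*lam:ℝ):ℂ) by push_cast; ring, Complex.cos_neg,
      Complex.sin_neg, ← Complex.ofReal_cos, ← Complex.ofReal_sin]
    ring
  have hcos2 : Real.cos (2*lam) = ((N:ℝ) - 2) / N := by
    rw [Real.cos_two_mul, hcos, div_pow, hsn2, hs12]
    field_simp
    ring
  have hsin2 : Real.sin (2*lam) = 2 * s1 / N := by
    rw [Real.sin_two_mul, hsin, hcos, ← hsn2]
    field_simp
  have hsum : ∀ (A B : ℂ), (∑ y : Fin N, (if y = t then A else B)) = A + ((N:ℂ) - 1) * B := by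
    intro A B
    rw [← Finset.add_sum_erase _ _ (Finset.mem_univ t), if_pos rfl]
    congr 1
    rw [Finset.sum_ite_of_false (fun y hy => Finset.ne_of_mem_erase hy), Finset.sum_const,
      Finset.card_erase_of_mem (Finset.mem_univ t), Finset.card_univ, Fintype.card_fin]
    have h : ((N - 1 : ℕ) : ℂ) = (N:ℂ) - 1 := by
      have h1 : (1:ℕ) ≤ N := by omega
      push_cast [h1]; ring
    rw [nsmul_eq_mul, h]
  have hsnC : ((sn:ℝ):ℂ) ≠ 0 := by exact_mod_cast hsnpos.ne'
  have hs1C : ((s1:ℝ):ℂ) ≠ 0 := by exact_mod_cast hs1posR.ne'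
  have hs2C : ((s2:ℝ):ℂ) ≠ 0 := by exact_mod_cast hs2pos.ne'
  have hNC : ((N:ℕ):ℂ) = ((sn:ℝ):ℂ)^2 := by exact_mod_cast hsn2.symm
  have hN1C : ((sn:ℝ):ℂ)^2 - 1 = ((s1:ℝ):ℂ)^2 := by
    have h : sn^2 - 1 = s1^2 := by rw [hsn2, hs12]
    exact_mod_cast h
  have hmj : (-Complex.I)^2 = -1 := (neg_sq Complex.I).trans Complex.I_sq
  constructor
  · intro x
    simp only [hG, Function.comp_apply, hD, hU, hψp, hφ]
    rw [show (∑ y : Fin N, (starRingEnd ℂ) ((1 / sn : ℝ):ℂ) *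
        (if y = t then -(if y = t then ((1/s2 : ℝ):ℂ) else Complex.I * ((1/s2:ℝ):ℂ) * ((1/s1:ℝ):ℂ))
          else (if y = t then ((1/s2 : ℝ):ℂ) else Complex.I * ((1/s2:ℝ):ℂ) * ((1/s1:ℝ):ℂ)))) =
        ∑ y : Fin N, (if y = t then (starRingEnd ℂ) ((1 / sn : ℝ):ℂ) * (-((1/s2 : ℝ):ℂ))
          else (starRingEnd ℂ) ((1 / sn : ℝ):ℂ) * (Complex.I * ((1/s2:ℝ):ℂ) * ((1/s1:ℝ):ℂ))) from
      Finset.sum_congr rfl (fun y _ => by split <;> simp_all)]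
    rw [hsum, hexpp, hcos2, hsin2]
    rw [Complex.conj_ofReal]
    by_cases hx : x = t <;> simp only [hx, if_pos, if_neg, ite_true, ite_false]
    · push_cast
      rw [hNC, hN1C]
      linear_combination grover_aux1 ((sn:ℝ):ℂ) ((s2:ℝ):ℂ) ((s1:ℝ):ℂ) Complex.I hsnC hs2C hs1C
    · push_cast
      rw [hNC, hN1C]
      linear_combination grover_aux2 ((sn:ℝ):ℂ) ((s2:ℝ):ℂ) ((s1:ℝ):ℂ) Complex.I hsnC hs2C hs1C
        hN1C.symm Complex.I_sq
  · intro x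
    simp only [hG, Function.comp_apply, hD, hU, hψm, hφ]
    rw [show (∑ y : Fin N, (starRingEnd ℂ) ((1 / sn : ℝ):ℂ) *
        (if y = t then
            -(if y = t then ((1/s2 : ℝ):ℂ) else -(Complex.I * ((1/s2:ℝ):ℂ) * ((1/s1:ℝ):ℂ)))
          else (if y = t then ((1/s2 : ℝ):ℂ)
            else -(Complex.I * ((1/s2:ℝ):ℂ) * ((1/s1:ℝ):ℂ))))) =
        ∑ y : Fin N, (if y = t then (starRingEnd ℂ) ((1 / sn : ℝ):ℂ) * (-((1/s2 : ℝ):ℂ))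
          else (starRingEnd ℂ) ((1 / sn : ℝ):ℂ) *
            (-Complex.I * ((1/s2:ℝ):ℂ) * ((1/s1:ℝ):ℂ))) from
      Finset.sum_congr rfl (fun y _ => by split <;> simp_all)]
    rw [hsum, hexpm, hcos2, hsin2]
    rw [Complex.conj_ofReal]
    by_cases hx : x = t <;> simp only [hx, if_pos, if_neg, ite_true, ite_false]
    · push_cast
      rw [hNC, hN1C]
      linear_combination grover_aux1 ((sn:ℝ):ℂ) ((s2:ℝ):ℂ) ((s1:ℝ):ℂ) (-Complex.I) hsnC hs2C hs1C
    · push_cast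
      rw [hNC, hN1C]
      linear_combination grover_aux2 ((sn:ℝ):ℂ) ((s2:ℝ):ℂ) ((s1:ℝ):ℂ) (-Complex.I) hsnC hs2C hs1C
        hN1C.symm hmj
end

section
/- Let A ≥ 2 and B ≥ 2 be natural numbers and set N = A·B. Work in ℂ^N with standard basis indexed by pairs (u,v) ∈ Fin A × Fin B. Fix a target (t*,t'), let U flip the sign of the coordinate at (t*,t') and fix all other basis vectors, and let the local Grover iterate be G₃ = D_loc ∘ U where (D_loc ψ)(u,v) = (2/B)·∑_{v'} ψ(u,v') − ψ(u,v). Set θ₁ = arcsin(1/√N) and θ' = arcsin(1/√B). Fix a natural number p₁, write C = cos((2p₁+1)·θ₁), and let v ∈ ℂ^N be the vector whose coordinate at (t*,t') is sin((2p₁+1)·θ₁) and whose coordinate at every other index is C/√(N−1). Then for every natural number p₂, the coordinates of G₃^{p₂} v are: sin((2p₁+1)θ₁)·cos(2p₂θ') + (√(B−1)/√(N−1))·C·sin(2p₂θ') at (t*,t'); (−sin((2p₁+1)θ₁)·sin(2p₂θ') + (√(B−1)/√(N−1))·C·cos(2p₂θ'))/√(B−1) at (t*,v') for every v' ≠ t';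 and C/√(N−1) at (u,v') for every u ≠ t* and every v'. -/
open Real Finset

/-- Lemma 3 of the paper: the explicit state after p₂ iterations of the local Grover
operator applied to the state produced by p₁ global Grover iterations. -/
theorem stmt_11 (A B : ℕ) (hA : 2 ≤ A) (hB : 2 ≤ B) (N : ℕ) (hN : N = A * B)
    (tstar : Fin A) (t' : Fin B)
    (U : (Fin A × Fin B → ℂ) → (Fin A × Fin B → ℂ))
    (hU : ∀ ψ i, U ψ i = if i = (tstar, t') then -ψ i else ψ i)
    (Dloc : (Fin A × Fin B → ℂ) → (Fin A × Fin B → ℂ))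
    (hDloc : ∀ ψ u v, Dloc ψ (u, v) = (2 / (B : ℂ)) * (∑ v' : Fin B, ψ (u, v')) - ψ (u, v))
    (G₃ : (Fin A × Fin B → ℂ) → (Fin A × Fin B → ℂ)) (hG₃ : G₃ = Dloc ∘ U)
    (θ₁ θ' : ℝ)
    (hθ₁ : θ₁ = Real.arcsin (1 / Real.sqrt N))
    (hθ' : θ' = Real.arcsin (1 / Real.sqrt B))
    (p₁ : ℕ) (C : ℝ) (hC : C = Real.cos ((2 * p₁ + 1) * θ₁))
    (v : Fin A × Fin B → ℂ)
    (hv : ∀ i, v i = if i = (tstar, t') then ((Real.sin ((2 * p₁ + 1) * θ₁) : ℝ) : ℂ)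
      else ((C / Real.sqrt ((N : ℝ) - 1) : ℝ) : ℂ)) :
    ∀ p₂ : ℕ,
      (G₃^[p₂] v (tstar, t') =
        ((Real.sin ((2 * p₁ + 1) * θ₁) * Real.cos (2 * p₂ * θ') +
            Real.sqrt ((B : ℝ) - 1) / Real.sqrt ((N : ℝ) - 1) * C *
              Real.sin (2 * p₂ * θ') : ℝ) : ℂ)) ∧
      (∀ v' : Fin B, v' ≠ t' → G₃^[p₂] v (tstar, v') =
        (((-(Real.sin ((2 * p₁ + 1) * θ₁) * Real.sin (2 * p₂ * θ')) +
            Real.sqrt ((B : ℝ) - 1) / Real.sqrt ((N : ℝ) - 1) * C *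
              Real.cos (2 * p₂ * θ')) / Real.sqrt ((B : ℝ) - 1) : ℝ) : ℂ)) ∧
      (∀ (u : Fin A) (v' : Fin B), u ≠ tstar → G₃^[p₂] v (u, v') =
        ((C / Real.sqrt ((N : ℝ) - 1) : ℝ) : ℂ)) := by
  intro p₂
  have hB0 : (0:ℝ) < (B:ℝ) := by
    have : 0 < B := by omega
    exact_mod_cast this
  have hBR : (2:ℝ) ≤ (B:ℝ) := by exact_mod_cast hB
  have hBne : (B:ℝ) ≠ 0 := ne_of_gt hB0
  have hBCne : (B:ℂ) ≠ 0 := Nat.cast_ne_zero.mpr (by omega)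
  have hNge : (4:ℝ) ≤ (N:ℝ) := by
    have h4 : 4 ≤ N := by
      subst hN
      calc 4 = 2 * 2 := rfl
        _ ≤ A * B := Nat.mul_le_mul hA hB
    exact_mod_cast h4
  have hwpos : 0 < Real.sqrt ((N:ℝ) - 1) := Real.sqrt_pos.mpr (by linarith)
  have hwne : Real.sqrt ((N:ℝ) - 1) ≠ 0 := ne_of_gt hwpos
  set r : ℝ := Real.sqrt ((B:ℝ) - 1) with hrdef
  have hrpos : 0 < r := Real.sqrt_pos.mpr (by linarith)
  have hrne : r ≠ 0 := ne_of_gt hrpos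
  have hr2 : r ^ 2 = (B:ℝ) - 1 := Real.sq_sqrt (by linarith)
  have hsBpos : 0 < Real.sqrt (B:ℝ) := Real.sqrt_pos.mpr hB0
  have hsB2 : Real.sqrt (B:ℝ) ^ 2 = (B:ℝ) := Real.sq_sqrt hB0.le
  have hsin' : Real.sin θ' = 1 / Real.sqrt (B:ℝ) := by
    rw [hθ', Real.sin_arcsin]
    · have h0 : (0:ℝ) ≤ 1 / Real.sqrt (B:ℝ) := by positivity
      linarith
    · rw [div_le_one hsBpos]
      nlinarith [hsB2, hsBpos]
  have hcos' : Real.cos θ' = r / Real.sqrt (B:ℝ) := by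
    rw [hθ', Real.cos_arcsin, hrdef]
    rw [div_pow, one_pow, hsB2]
    rw [show 1 - 1/(B:ℝ) = ((B:ℝ)-1)/(B:ℝ) by field_simp]
    rw [Real.sqrt_div (by linarith)]
  have hcos2 : Real.cos (2*θ') = 1 - 2/(B:ℝ) := by
    rw [Real.cos_two_mul, hcos', div_pow, hr2, hsB2]
    field_simp
    ring
  have hmul : Real.sqrt (B:ℝ) * Real.sqrt (B:ℝ) = (B:ℝ) := Real.mul_self_sqrt hB0.le
  have hsin2 : Real.sin (2*θ') = 2*r/(B:ℝ) := by
    rw [Real.sin_two_mul, hsin', hcos']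
    rw [show 2 * (1 / Real.sqrt (B:ℝ)) * (r / Real.sqrt (B:ℝ))
        = 2 * r / (Real.sqrt (B:ℝ) * Real.sqrt (B:ℝ)) by ring, hmul]
  set s : ℝ := Real.sin ((2 * (p₁:ℝ) + 1) * θ₁) with hsdef
  set k : ℝ := r / Real.sqrt ((N:ℝ) - 1) with hkdef
  set g : ℝ := C / Real.sqrt ((N:ℝ) - 1) with hgdef
  induction p₂ with
  | zero =>
    refine ⟨?_, ?_, ?_⟩
    · rw [Function.iterate_zero_apply, hv, if_pos rfl]
      push_cast
      norm_num
    · intro v' hv'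
      have hne : (tstar, v') ≠ (tstar, t') := by simp [Prod.ext_iff, hv']
      rw [Function.iterate_zero_apply, hv, if_neg hne, Complex.ofReal_inj]
      norm_num
      rw [hkdef, hgdef]
      field_simp
    · intro u v' hu
      have hne : (u, v') ≠ (tstar, t') := by simp [Prod.ext_iff, hu]
      rw [Function.iterate_zero_apply, hv, if_neg hne]
  | succ p ih =>
    obtain ⟨h1, h2, h3⟩ := ih
    set ψ := G₃^[p] v with hψ
    set ap : ℝ := s * Real.cos (2 * (p:ℝ) * θ') + k * C * Real.sin (2 * (p:ℝ) * θ') with hap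
    set bp : ℝ := (-(s * Real.sin (2 * (p:ℝ) * θ')) + k * C * Real.cos (2 * (p:ℝ) * θ')) / r
      with hbp
    have hrowt : ∑ w : Fin B, U ψ (tstar, w) = -(ap:ℂ) + ((B:ℂ) - 1) * (bp:ℂ) := by
      have hterm : ∀ w : Fin B, U ψ (tstar, w) = (if w = t' then -(ap:ℂ) else (bp:ℂ)) := by
        intro w
        rw [hU]
        by_cases hw : w = t'
        · subst hw; simp [h1]
        · have hne : (tstar, w) ≠ (tstar, t') := by simp [Prod.ext_iff, hw]
          rw [if_neg hne, if_neg hw, h2 w hw]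
      calc ∑ w : Fin B, U ψ (tstar, w)
          = ∑ w : Fin B, ((if w = t' then -(ap:ℂ) - (bp:ℂ) else 0) + (bp:ℂ)) := by
            refine Finset.sum_congr rfl fun w _ => ?_
            rw [hterm w]
            by_cases hw : w = t' <;> simp [hw]
        _ = (-(ap:ℂ) - bp) + (B:ℂ) * bp := by
            rw [Finset.sum_add_distrib, Finset.sum_ite_eq' Finset.univ t' (fun _ => -(ap:ℂ) - bp),
              Finset.sum_const]
            simp [Finset.card_univ, mul_comm]
        _ = -(ap:ℂ) + ((B:ℂ) - 1) * bp := by ring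
    have hrowu : ∀ u : Fin A, u ≠ tstar → ∑ w : Fin B, U ψ (u, w) = (B:ℂ) * (g:ℂ) := by
      intro u hu
      have hterm : ∀ w : Fin B, U ψ (u, w) = (g:ℂ) := by
        intro w
        rw [hU]
        have hne : (u, w) ≠ (tstar, t') := by simp [Prod.ext_iff, hu]
        rw [if_neg hne, h3 u w hu]
      rw [Finset.sum_congr rfl fun w _ => hterm w, Finset.sum_const]
      simp [Finset.card_univ, mul_comm]
    have key1 : 2/(B:ℝ) * (-ap + ((B:ℝ) - 1) * bp) + ap
        = s * Real.cos (2 * ((p:ℝ) + 1) * θ') + k * C * Real.sin (2 * ((p:ℝ) + 1) * θ') := by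
      have hang : 2 * ((p:ℝ) + 1) * θ' = 2 * (p:ℝ) * θ' + 2 * θ' := by ring
      have hB' : (B:ℝ) = r ^ 2 + 1 := by linarith [hr2]
      have hr1 : r ^ 2 + 1 ≠ 0 := by positivity
      rw [hang, Real.cos_add, Real.sin_add, hcos2, hsin2, hap, hbp, hB']
      field_simp
      ring
    have key2 : 2/(B:ℝ) * (-ap + ((B:ℝ) - 1) * bp) - bp
        = (-(s * Real.sin (2 * ((p:ℝ) + 1) * θ')) + k * C * Real.cos (2 * ((p:ℝ) + 1) * θ')) / r := by
      have hang : 2 * ((p:ℝ) + 1) * θ' = 2 * (p:ℝ) * θ' + 2 * θ' := by ring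
      have hB' : (B:ℝ) = r ^ 2 + 1 := by linarith [hr2]
      have hr1 : r ^ 2 + 1 ≠ 0 := by positivity
      rw [hang, Real.cos_add, Real.sin_add, hcos2, hsin2, hap, hbp, hB']
      field_simp
      ring
    refine ⟨?_, ?_, ?_⟩
    · rw [Function.iterate_succ_apply', ← hψ, hG₃, Function.comp_apply, hDloc, hrowt, hU,
        if_pos rfl, h1]
      have key1C := congrArg (fun x : ℝ => (x:ℂ)) key1
      push_cast at key1C ⊢
      linear_combination key1C
    · intro v' hv'
      have hne : (tstar, v') ≠ (tstar, t') := by simp [Prod.ext_iff, hv']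
      rw [Function.iterate_succ_apply', ← hψ, hG₃, Function.comp_apply, hDloc, hrowt, hU,
        if_neg hne, h2 v' hv']
      have key2C := congrArg (fun x : ℝ => (x:ℂ)) key2
      push_cast at key2C ⊢
      linear_combination key2C
    · intro u v' hu
      have hne : (u, v') ≠ (tstar, t') := by simp [Prod.ext_iff, hu]
      rw [Function.iterate_succ_apply', ← hψ, hG₃, Function.comp_apply, hDloc, hrowu u hu, hU,
        if_neg hne, h3 u v' hu]
      field_simp
      ring
end

section
/- Let A ≥ 2 and B ≥ 2 be natural numbers and set N = A·B. Work in ℂ^N with standard basis indexed by pairs (u,v) ∈ Fin A × Fin B. Fix a target (t*,t'), let U flip the sign of the coordinate at (t*,t') and fix all other basis vectors, and let G₃ = D_loc ∘ U where (D_loc ψ)(u,v) = (2/B)·∑_{v'} ψ(u,v') − ψ(u,v). Set θ' = arcsin(1/√B) and define ψ₀± ∈ ℂ^N by: coordinate 1/√2 at (t*,t'), coordinate ±i/(√2·√(B−1)) at (t*,v') for every v' ≠ t', and coordinate 0 at all indices (u,v') with u ≠ t*. Then G₃ ψ₀⁺ = exp(2iθ')·ψ₀⁺ and G₃ ψ₀⁻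 = exp(−2iθ')·ψ₀⁻. -/
open Real Finset Complex

theorem grover_alg (Bc a b J : ℂ) (ha : a ≠ 0) (hb : b ≠ 0) (hB0 : Bc ≠ 0)
    (hb2 : b * b = Bc - 1) (hJ : J * J = -1) :
    ((2/Bc) * (Bc * (J/(a*b)) + (-(1/a) - J/(a*b))) + 1/a
      = ((1 - 2/Bc) + (2*b/Bc)*J) * (1/a)) ∧
    ((2/Bc) * (Bc * (J/(a*b)) + (-(1/a) - J/(a*b))) - J/(a*b)
      = ((1 - 2/Bc) + (2*b/Bc)*J) * (J/(a*b))) := by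
  have r1 : (2*b/Bc) * J * (1/a) = 2 * (J/(a*b)) - (2/Bc) * (J/(a*b)) := by
    field_simp
    linear_combination J * hb2
  have r2 : b * J * (J/(a*b)) = -(1/a) := by
    field_simp
    linear_combination hJ
  have expand : (2/Bc) * (Bc * (J/(a*b)) + (-(1/a) - J/(a*b)))
      = 2 * (J/(a*b)) + (2/Bc) * (-(1/a) - J/(a*b)) := by
    field_simp
  rw [expand]
  constructor
  · linear_combination -r1
  · linear_combination (-(2:ℂ)/Bc) * r2

/-- Eigenvalue–eigenvector computation for the local Grover iterate (Appendix F of the paper). -/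
theorem stmt_12 (A B : ℕ) (hA : 2 ≤ A) (hB : 2 ≤ B) (N : ℕ) (hN : N = A * B)
    (tstar : Fin A) (t' : Fin B)
    (U : (Fin A × Fin B → ℂ) → (Fin A × Fin B → ℂ))
    (hU : ∀ ψ i, U ψ i = if i = (tstar, t') then -ψ i else ψ i)
    (Dloc : (Fin A × Fin B → ℂ) → (Fin A × Fin B → ℂ))
    (hDloc : ∀ ψ u v, Dloc ψ (u, v) = (2 / (B : ℂ)) * (∑ v' : Fin B, ψ (u, v')) - ψ (u, v))
    (G₃ : (Fin A × Fin B → ℂ) → (Fin A × Fin B → ℂ)) (hG₃ : G₃ = Dloc ∘ U)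
    (θ' : ℝ) (hθ' : θ' = Real.arcsin (1 / Real.sqrt B))
    (ψp ψm : Fin A × Fin B → ℂ)
    (hψp : ∀ u v, ψp (u, v) =
      if u = tstar then
        (if v = t' then ((1 / Real.sqrt 2 : ℝ) : ℂ)
          else Complex.I / ((Real.sqrt 2 : ℝ) * (Real.sqrt ((B : ℝ) - 1) : ℝ)))
      else 0)
    (hψm : ∀ u v, ψm (u, v) =
      if u = tstar then
        (if v = t' then ((1 / Real.sqrt 2 : ℝ) : ℂ)
          else -(Complex.I / ((Real.sqrt 2 : ℝ) * (Real.sqrt ((B : ℝ) - 1) : ℝ))))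
      else 0) :
    (∀ i, G₃ ψp i = Complex.exp (2 * Complex.I * θ') * ψp i) ∧
    (∀ i, G₃ ψm i = Complex.exp (-(2 * Complex.I * θ')) * ψm i) := by
  have hB2 : (2:ℝ) ≤ (B:ℝ) := by exact_mod_cast hB
  -- abbreviations
  set a : ℂ := ((Real.sqrt 2 : ℝ) : ℂ) with ha_def
  set b : ℂ := ((Real.sqrt ((B:ℝ) - 1) : ℝ) : ℂ) with hb_def
  have ha : a ≠ 0 := by
    simp only [ha_def, ne_eq, Complex.ofReal_eq_zero]
    positivity
  have hbR : (0:ℝ) < Real.sqrt ((B:ℝ) - 1) := Real.sqrt_pos.2 (by linarith)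
  have hb : b ≠ 0 := by
    simp only [hb_def, ne_eq, Complex.ofReal_eq_zero]
    exact ne_of_gt hbR
  have hB0 : (B:ℂ) ≠ 0 := by
    exact_mod_cast Nat.cast_ne_zero.2 (by omega : B ≠ 0)
  have hb2 : b * b = (B:ℂ) - 1 := by
    rw [hb_def, ← Complex.ofReal_mul, Real.mul_self_sqrt (by linarith : (0:ℝ) ≤ (B:ℝ) - 1)]
    push_cast
    ring
  -- eigenvalues
  have hsB : (0:ℝ) < Real.sqrt B := Real.sqrt_pos.2 (by linarith)
  have hs : Real.sin θ' = 1 / Real.sqrt B := by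
    rw [hθ', Real.sin_arcsin]
    · rw [le_div_iff₀ hsB]; nlinarith [Real.sq_sqrt (by linarith : (0:ℝ) ≤ (B:ℝ)), hsB]
    · rw [div_le_one hsB]
      nlinarith [Real.sq_sqrt (by linarith : (0:ℝ) ≤ (B:ℝ))]
  have hc : Real.cos θ' = Real.sqrt ((B:ℝ)-1) / Real.sqrt B := by
    rw [hθ', Real.cos_arcsin]
    rw [div_pow, one_pow, Real.sq_sqrt (by linarith : (0:ℝ) ≤ (B:ℝ))]
    rw [one_sub_div (by linarith : (B:ℝ) ≠ 0), Real.sqrt_div (by linarith : (0:ℝ) ≤ (B:ℝ)-1)]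
  have hcos2 : Real.cos (2*θ') = 1 - 2/(B:ℝ) := by
    rw [Real.cos_two_mul', hs, hc]
    rw [div_pow, div_pow, one_pow, Real.sq_sqrt (by linarith : (0:ℝ) ≤ (B:ℝ))]
    rw [Real.sq_sqrt (by linarith : (0:ℝ) ≤ (B:ℝ)-1)]
    field_simp
    ring
  have hsin2 : Real.sin (2*θ') = 2 * Real.sqrt ((B:ℝ)-1) / (B:ℝ) := by
    rw [Real.sin_two_mul, hs, hc]
    rw [show (2:ℝ) * (1/Real.sqrt B) * (Real.sqrt ((B:ℝ)-1) / Real.sqrt B)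
        = 2 * Real.sqrt ((B:ℝ)-1) / (Real.sqrt B * Real.sqrt B) by ring,
      Real.mul_self_sqrt (by linarith : (0:ℝ) ≤ (B:ℝ))]
  have key : ∀ x : ℝ, Complex.exp ((x:ℂ) * Complex.I)
      = ((Real.cos x : ℝ):ℂ) + ((Real.sin x : ℝ):ℂ) * Complex.I := by
    intro x
    rw [Complex.exp_mul_I, ← Complex.ofReal_cos, ← Complex.ofReal_sin]
  have hexpp : Complex.exp (2 * Complex.I * θ')
      = ((1:ℂ) - 2/(B:ℂ)) + (2*b/(B:ℂ)) * Complex.I := by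
    have h1 : (2 * Complex.I * (θ':ℂ)) = ((2*θ' : ℝ):ℂ) * Complex.I := by push_cast; ring
    rw [h1, key, hcos2, hsin2, hb_def]; push_cast; ring
  have hexpm : Complex.exp (-(2 * Complex.I * θ'))
      = ((1:ℂ) - 2/(B:ℂ)) + (2*b/(B:ℂ)) * (-Complex.I) := by
    have h1 : (-(2 * Complex.I * (θ':ℂ))) = ((-(2*θ') : ℝ):ℂ) * Complex.I := by push_cast; ring
    rw [h1, key, Real.cos_neg, Real.sin_neg, hcos2, hsin2, hb_def]; push_cast; ring
  -- the general coordinatewise claim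
  have main : ∀ (J : ℂ), J * J = -1 →
      ∀ (ψ : Fin A × Fin B → ℂ),
      (∀ u v, ψ (u, v) = if u = tstar then (if v = t' then 1/a else J/(a*b)) else 0) →
      ∀ i, G₃ ψ i = (((1:ℂ) - 2/(B:ℂ)) + (2*b/(B:ℂ)) * J) * ψ i := by
    intro J hJ ψ hψ i
    obtain ⟨u, v⟩ := i
    rw [hG₃]
    simp only [Function.comp_apply]
    rw [hDloc]
    by_cases hu : u = tstar
    · subst hu
      -- sum over v'
      have hUv : ∀ v' : Fin B, U ψ (u, v')
          = J/(a*b) + (if v' = t' then (-(1/a) - J/(a*b)) else 0) := by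
        intro v'
        rw [hU, hψ]
        by_cases hv' : v' = t'
        · subst hv'; simp
        · simp [hv', Prod.ext_iff]
      have hsum : ∑ v' : Fin B, U ψ (u, v')
          = (B:ℂ) * (J/(a*b)) + (-(1/a) - J/(a*b)) := by
        simp only [hUv]
        rw [Finset.sum_add_distrib, Finset.sum_const, Finset.sum_ite_eq' Finset.univ t'
          (fun _ => (-(1/a) - J/(a*b)))]
        simp [mul_comm]
      rw [hsum, hU, hψ]
      obtain ⟨h1, h2⟩ := grover_alg (B:ℂ) a b J ha hb hB0 hb2 hJ
      by_cases hv : v = t'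
      · subst hv
        simp only [if_pos rfl, Prod.mk.injEq, and_self, if_true]
        rw [sub_neg_eq_add]
        exact h1
      · simpa [hv, Prod.ext_iff] using h2
    · -- u ≠ tstar : everything vanishes
      have hz : ∀ v' : Fin B, U ψ (u, v') = 0 := by
        intro v'
        rw [hU, hψ]
        simp [hu, Prod.ext_iff]
      rw [hU]
      simp only [hz, Finset.sum_const_zero, mul_zero, zero_sub]
      rw [hψ]
      simp [hu, Prod.ext_iff]
  constructor
  · intro i
    rw [hexpp]
    refine main Complex.I Complex.I_mul_I ψp ?_ i
    intro u v
    rw [hψp]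
    congr 1
    congr 1
    · push_cast; ring
  · intro i
    rw [hexpm]
    refine main (-Complex.I) (by simp [Complex.I_mul_I]) ψm ?_ i
    intro u v
    rw [hψm]
    congr 1
    congr 1
    · push_cast; ring
    · rw [neg_div]
end

section
/- Let N ≥ 2 and B ≥ 2 be natural numbers with B < N, and let a, a', C, θ, φ be real numbers. Set E = √(B−1)·a' + (N−B)·C/√(N−1) and F = C/√(N−1). If a ≠ 0, sin(θ/2) ≠ 0, cos(φ + θ/2) = −E·cos(θ/2)/a, and sin(φ + θ/2) = ((cos θ − 1)·E + N·F)/(2·a·sin(θ/2)), then in the complex numbers a·(1 − e^{iθ})·e^{iφ}/N + a'·(B−1)·(1 − e^{iθ})/(N·√(B−1)) + C·(N−B)·(1 − e^{iθ})/(N·√(N−1)) − C/√(N−1) = 0. -/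
set_option maxHeartbeats 1000000


open Real Complex

/-- Lemma 5 of the paper: the non-target block amplitude after the generalized Grover
operator G₄ vanishes under the stated angle conditions. -/
theorem stmt_13 (N B : ℕ) (hN : 2 ≤ N) (hB : 2 ≤ B) (hBN : B < N)
    (a a' C θ φ : ℝ)
    (E F : ℝ)
    (hE : E = Real.sqrt ((B : ℝ) - 1) * a' + ((N : ℝ) - B) * C / Real.sqrt ((N : ℝ) - 1))
    (hF : F = C / Real.sqrt ((N : ℝ) - 1))
    (ha : a ≠ 0) (hs : Real.sin (θ / 2) ≠ 0)
    (hcos : Real.cos (φ + θ / 2) = -E * Real.cos (θ / 2) / a)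
    (hsin : Real.sin (φ + θ / 2) =
      ((Real.cos θ - 1) * E + N * F) / (2 * a * Real.sin (θ / 2))) :
    (a : ℂ) * (1 - Complex.exp (Complex.I * θ)) * Complex.exp (Complex.I * φ) / (N : ℂ) +
        (a' : ℂ) * ((B : ℂ) - 1) * (1 - Complex.exp (Complex.I * θ)) /
          ((N : ℂ) * (Real.sqrt ((B : ℝ) - 1) : ℝ)) +
        (C : ℂ) * ((N : ℂ) - B) * (1 - Complex.exp (Complex.I * θ)) /
          ((N : ℂ) * (Real.sqrt ((N : ℝ) - 1) : ℝ)) -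
        (C : ℂ) / (Real.sqrt ((N : ℝ) - 1) : ℝ) = 0 := by
  set sB := Real.sqrt ((B : ℝ) - 1) with hsBdef
  set sN := Real.sqrt ((N : ℝ) - 1) with hsNdef
  have hB1 : (0:ℝ) < (B:ℝ) - 1 := by
    have : (2:ℝ) ≤ (B:ℝ) := by exact_mod_cast hB
    linarith
  have hN1 : (0:ℝ) < (N:ℝ) - 1 := by
    have : (2:ℝ) ≤ (N:ℝ) := by exact_mod_cast hN
    linarith
  have hsB0 : sB ≠ 0 := by positivity
  have hsN0 : sN ≠ 0 := by positivity
  have hsB2 : sB ^ 2 = (B:ℝ) - 1 := Real.sq_sqrt hB1.le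
  have hN0 : (N:ℝ) ≠ 0 := by positivity
  -- real trig facts
  have hc' : a * Real.cos (φ + θ / 2) = -E * Real.cos (θ / 2) := by
    rw [hcos]; field_simp
  have hs' : 2 * a * Real.sin (θ / 2) * Real.sin (φ + θ / 2)
      = (Real.cos θ - 1) * E + N * F := by
    rw [hsin]; field_simp
  have hth : θ = 2 * (θ / 2) := by ring
  have hsin2 : Real.sin θ = 2 * Real.sin (θ / 2) * Real.cos (θ / 2) := by
    rw [hth, Real.sin_two_mul]; ring_nf
  have hcos2 : Real.cos θ = 1 - 2 * Real.sin (θ / 2) ^ 2 := by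
    nth_rewrite 1 [hth]
    rw [Real.cos_two_mul]
    nlinarith [Real.sin_sq_add_cos_sq (θ / 2)]
  rw [Real.cos_add] at hc'
  rw [Real.sin_add] at hs'
  -- key complex identity
  have key : (a : ℂ) * Complex.exp (Complex.I * φ) * (1 - Complex.exp (Complex.I * θ))
      + (E : ℂ) * (1 - Complex.exp (Complex.I * θ)) = (N : ℂ) * F := by
    have e1 : Complex.I * (θ:ℂ) = (θ:ℂ) * Complex.I := by ring
    have e2 : Complex.I * (φ:ℂ) = (φ:ℂ) * Complex.I := by ring
    rw [e1, e2, Complex.exp_mul_I, Complex.exp_mul_I]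
    apply Complex.ext
    · simp [Complex.add_re, Complex.add_im, Complex.sub_re, Complex.sub_im,
        Complex.mul_re, Complex.mul_im, Complex.cos_ofReal_re, Complex.sin_ofReal_re,
        Complex.cos_ofReal_im, Complex.sin_ofReal_im]
      linear_combination hs' - (a * Real.cos φ) * hcos2 + (a * Real.sin φ) * hsin2
    · simp [Complex.add_re, Complex.add_im, Complex.sub_re, Complex.sub_im,
        Complex.mul_re, Complex.mul_im, Complex.cos_ofReal_re, Complex.sin_ofReal_re,
        Complex.cos_ofReal_im, Complex.sin_ofReal_im]
      linear_combination (-(a * Real.cos φ + E)) * hsin2 + (-(a * Real.sin φ)) * hcos2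
        + (-(2 * Real.sin (θ / 2))) * hc'
  -- cast hE, hF
  have hE' : (E:ℂ) * sN = (sB:ℂ) * a' * sN + ((N:ℂ) - B) * C := by
    have : E * sN = sB * a' * sN + ((N:ℝ) - B) * C := by
      rw [hE]; field_simp
    exact_mod_cast congrArg Complex.ofReal this
  have hF' : (F:ℂ) * sN = (C:ℂ) := by
    have : F * sN = C := by rw [hF]; field_simp
    exact_mod_cast congrArg Complex.ofReal this
  have hsB2' : (sB:ℂ) ^ 2 = (B:ℂ) - 1 := by exact_mod_cast congrArg Complex.ofReal hsB2
  have hN0' : (N:ℂ) ≠ 0 := by exact_mod_cast hN0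
  have hsB0' : (sB:ℂ) ≠ 0 := by exact_mod_cast hsB0
  have hsN0' : (sN:ℂ) ≠ 0 := by exact_mod_cast hsN0
  have hprod : ((N:ℂ) * sB * sN) ≠ 0 := by
    simp [hN0', hsB0', hsN0']
  have hz : ((N:ℂ) * sB * sN) *
      ((a : ℂ) * (1 - Complex.exp (Complex.I * θ)) * Complex.exp (Complex.I * φ) / (N : ℂ) +
        (a' : ℂ) * ((B : ℂ) - 1) * (1 - Complex.exp (Complex.I * θ)) /
          ((N : ℂ) * (sB : ℝ)) +
        (C : ℂ) * ((N : ℂ) - B) * (1 - Complex.exp (Complex.I * θ)) /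
          ((N : ℂ) * (sN : ℝ)) -
        (C : ℂ) / (sN : ℝ)) = 0 := by
    have expand : ((N:ℂ) * sB * sN) *
        ((a : ℂ) * (1 - Complex.exp (Complex.I * θ)) * Complex.exp (Complex.I * φ) / (N : ℂ) +
          (a' : ℂ) * ((B : ℂ) - 1) * (1 - Complex.exp (Complex.I * θ)) /
            ((N : ℂ) * (sB : ℝ)) +
          (C : ℂ) * ((N : ℂ) - B) * (1 - Complex.exp (Complex.I * θ)) /
            ((N : ℂ) * (sN : ℝ)) -
          (C : ℂ) / (sN : ℝ)) =
        (a:ℂ) * Complex.exp (Complex.I * φ) * (1 - Complex.exp (Complex.I * θ)) * sB * sN +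
          (a':ℂ) * ((B:ℂ) - 1) * (1 - Complex.exp (Complex.I * θ)) * sN +
          (C:ℂ) * ((N:ℂ) - B) * (1 - Complex.exp (Complex.I * θ)) * sB -
          (C:ℂ) * N * sB := by
      have t1 : ((N:ℂ) * sB * sN) *
          ((a : ℂ) * (1 - Complex.exp (Complex.I * θ)) * Complex.exp (Complex.I * φ) / (N : ℂ)) =
          (a:ℂ) * Complex.exp (Complex.I * φ) * (1 - Complex.exp (Complex.I * θ)) * sB * sN := by
        field_simp
      have t2 : ((N:ℂ) * sB * sN) *
          ((a' : ℂ) * ((B : ℂ) - 1) * (1 - Complex.exp (Complex.I * θ)) / ((N : ℂ) * (sB : ℝ))) =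
          (a':ℂ) * ((B:ℂ) - 1) * (1 - Complex.exp (Complex.I * θ)) * sN := by
        field_simp
      have t3 : ((N:ℂ) * sB * sN) *
          ((C : ℂ) * ((N : ℂ) - B) * (1 - Complex.exp (Complex.I * θ)) / ((N : ℂ) * (sN : ℝ))) =
          (C:ℂ) * ((N:ℂ) - B) * (1 - Complex.exp (Complex.I * θ)) * sB := by
        field_simp
      have t4 : ((N:ℂ) * sB * sN) * ((C : ℂ) / (sN : ℝ)) = (C:ℂ) * N * sB := by
        field_simp
      linear_combination t1 + t2 + t3 - t4
    rw [expand]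
    linear_combination ((sB:ℂ) * sN) * key - ((sB:ℂ) * (1 - Complex.exp (Complex.I * θ))) * hE'
      + (N:ℂ) * (sB:ℂ) * hF' - ((a':ℂ) * (1 - Complex.exp (Complex.I * θ)) * sN) * hsB2'
  exact (mul_eq_zero.mp hz).resolve_left hprod
end

section
/- Let n, k, p be natural numbers with p ≥ 4 and n − p − k ≥ 7, and set m = n − k and B = 2^{n−p−k}. Define θ' = arcsin(1/√B), γ_p = (√(2^p)/2)·arctan(√(3·2^p − 4)/(2^p − 2)), η_p = arcsin(√(2^p/(4·(2^p − 1)))), and the (nearest-integer) rounded iteration numbers p₁ = round((π/4)·√(2^m) − γ_p·√B) and p₂ = round(η_p·√B). Then p₁·(16m − 10) + p₂·(16m − 8p − 10) + (16m − 10) > (⌊(π/2 − θ')/(2θ')⌋ + 1)·(16(m − p) − 10). -/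
open Real

private lemma arctan_le_self' {x : ℝ} (hx : 0 ≤ x) : Real.arctan x ≤ x := by
  rcases eq_or_lt_of_le hx with h | h
  · simp [← h]
  · have h1 : 0 < Real.arctan x := by
      have h2 := Real.arctan_strictMono h
      rwa [Real.arctan_zero] at h2
    calc Real.arctan x ≤ Real.tan (Real.arctan x) :=
          Real.le_tan h1.le (Real.arctan_lt_pi_div_two x)
      _ = x := Real.tan_arctan x

private lemma round_ge' (x : ℝ) : x - 1/2 ≤ (round x : ℝ) := by
  have h := abs_le.1 (abs_sub_round x)
  linarith [h.2]

set_option maxHeartbeats 1600000 in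
/-- Quantitative content of Theorem 2 of the paper: the total circuit depth of the first
stage of the IDGS algorithm exceeds that of its second stage. -/
theorem stmt_14 (n k p : ℕ) (hp : 4 ≤ p) (hn : 7 ≤ n - p - k)
    (m B : ℕ) (hm : m = n - k) (hB : B = 2 ^ (n - p - k))
    (θ' γp ηp : ℝ)
    (hθ' : θ' = Real.arcsin (1 / Real.sqrt B))
    (hγ : γp = Real.sqrt (2 ^ p) / 2 *
      Real.arctan (Real.sqrt (3 * (2 : ℝ) ^ p - 4) / ((2 : ℝ) ^ p - 2)))
    (hη : ηp = Real.arcsin (Real.sqrt ((2 : ℝ) ^ p / (4 * ((2 : ℝ) ^ p - 1)))))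
    (p₁ p₂ : ℤ)
    (hp₁ : p₁ = round (Real.pi / 4 * Real.sqrt (2 ^ m) - γp * Real.sqrt B))
    (hp₂ : p₂ = round (ηp * Real.sqrt B)) :
    (p₁ : ℝ) * (16 * m - 10) + (p₂ : ℝ) * (16 * m - 8 * p - 10) + (16 * (m : ℝ) - 10) >
      ((⌊(Real.pi / 2 - θ') / (2 * θ')⌋ : ℝ) + 1) * (16 * ((m : ℝ) - p) - 10) := by
  set q : ℕ := n - p - k with hqd
  have hq : m = p + q := by omega
  have hq7 : 7 ≤ q := hn
  have hBR : (B : ℝ) = 2 ^ q := by rw [hB]; push_cast; ring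
  have h2p : (16 : ℝ) ≤ 2 ^ p := by
    calc (16:ℝ) = 2 ^ 4 := by norm_num
      _ ≤ 2 ^ p := pow_le_pow_right₀ one_le_two hp
  set s : ℝ := Real.sqrt (2 ^ p) with hsd
  set b : ℝ := Real.sqrt B with hbd
  have hs2 : s ^ 2 = 2 ^ p := Real.sq_sqrt (by positivity)
  have hb2 : b ^ 2 = (B : ℝ) := Real.sq_sqrt (by positivity)
  have hs4 : (4:ℝ) ≤ s := by
    rw [hsd]
    exact (Real.le_sqrt (by norm_num) (by positivity)).2 (by nlinarith)
  have hspos : 0 < s := by linarith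
  have hsne : s ≠ 0 := ne_of_gt hspos
  have hBge : (128:ℝ) ≤ (B:ℝ) := by
    rw [hBR]
    calc (128:ℝ) = 2 ^ 7 := by norm_num
      _ ≤ 2 ^ q := pow_le_pow_right₀ one_le_two hq7
  have hb11 : (11:ℝ) ≤ b := by
    rw [hbd]
    exact (Real.le_sqrt (by norm_num) (by positivity)).2 (by nlinarith)
  have hbpos : 0 < b := by linarith
  have hsqrtm : Real.sqrt (2 ^ m) = s * b := by
    rw [hq, pow_add, Real.sqrt_mul (by positivity : (0:ℝ) ≤ 2 ^ p), hsd, hbd, hBR]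
  -- bound on γp
  have hpden : (0:ℝ) < (2:ℝ) ^ p - 2 := by nlinarith
  have harg0 : 0 ≤ Real.sqrt (3 * (2:ℝ) ^ p - 4) / ((2:ℝ) ^ p - 2) :=
    div_nonneg (Real.sqrt_nonneg _) hpden.le
  have h3sq : Real.sqrt 3 ^ 2 = 3 := Real.sq_sqrt (by norm_num)
  have h3nn : 0 ≤ Real.sqrt 3 := Real.sqrt_nonneg 3
  have hnum : Real.sqrt (3 * (2:ℝ) ^ p - 4) ≤ Real.sqrt 3 * s := by
    rw [hsd, ← Real.sqrt_mul (by norm_num : (0:ℝ) ≤ 3)]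
    exact Real.sqrt_le_sqrt (by nlinarith)
  have hs216 : (16:ℝ) ≤ s ^ 2 := by nlinarith
  have harg_le : Real.sqrt (3 * (2:ℝ) ^ p - 4) / ((2:ℝ) ^ p - 2)
      ≤ 8 * Real.sqrt 3 / (7 * s) := by
    rw [div_le_div_iff₀ hpden (by positivity)]
    have h1 : Real.sqrt (3 * (2:ℝ) ^ p - 4) * (7 * s) ≤ (Real.sqrt 3 * s) * (7 * s) :=
      mul_le_mul_of_nonneg_right hnum (by positivity)
    nlinarith [mul_nonneg h3nn (sub_nonneg.2 hs216)]
  have hγle : γp ≤ 4 * Real.sqrt 3 / 7 := by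
    rw [hγ]
    have h2 : Real.arctan (Real.sqrt (3 * (2:ℝ) ^ p - 4) / ((2:ℝ) ^ p - 2))
        ≤ 8 * Real.sqrt 3 / (7 * s) :=
      le_trans (arctan_le_self' harg0) harg_le
    have heq : s / 2 * (8 * Real.sqrt 3 / (7 * s)) = 4 * Real.sqrt 3 / 7 := by
      field_simp; ring
    calc s / 2 * Real.arctan (Real.sqrt (3 * (2:ℝ) ^ p - 4) / ((2:ℝ) ^ p - 2))
        ≤ s / 2 * (8 * Real.sqrt 3 / (7 * s)) :=
          mul_le_mul_of_nonneg_left h2 (by linarith)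
      _ = 4 * Real.sqrt 3 / 7 := heq
  -- bound on ηp
  have hηge : π / 6 ≤ ηp := by
    rw [hη]
    have h6 : Real.arcsin (1/2 : ℝ) = π / 6 := by
      have hb1 : -(π/2) ≤ π/6 := by linarith [Real.pi_pos]
      have hb2 : π/6 ≤ π/2 := by linarith [Real.pi_pos]
      rw [← Real.sin_pi_div_six]
      exact Real.arcsin_sin hb1 hb2
    have hrnn : (0:ℝ) ≤ (2:ℝ) ^ p / (4 * ((2:ℝ) ^ p - 1)) :=
      div_nonneg (by positivity) (by nlinarith)
    have hhalf : (1:ℝ)/2 ≤ Real.sqrt ((2:ℝ) ^ p / (4 * ((2:ℝ) ^ p - 1))) := by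
      refine (Real.le_sqrt (by norm_num) hrnn).2 ?_
      rw [le_div_iff₀ (by nlinarith : (0:ℝ) < 4 * ((2:ℝ) ^ p - 1))]
      nlinarith
    calc π / 6 = Real.arcsin (1/2 : ℝ) := h6.symm
      _ ≤ _ := Real.monotone_arcsin hhalf
  -- bounds on θ'
  have hinvpos : 0 < 1 / b := one_div_pos.2 hbpos
  have hinv1 : 1 / b ≤ 1 := by rw [div_le_one hbpos]; linarith
  have hθpos : 0 < θ' := by rw [hθ']; exact Real.arcsin_pos.2 hinvpos
  have hθge : 1 / b ≤ θ' := by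
    have hsin : Real.sin θ' = 1 / b := by
      rw [hθ']; exact Real.sin_arcsin (by linarith) hinv1
    have h := Real.sin_le hθpos.le
    rw [hsin] at h; exact h
  have hθb : 1 ≤ θ' * b := (div_le_iff₀ hbpos).1 hθge
  -- round lower bounds
  have hr1 : π / 4 * (s * b) - γp * b - 1/2 ≤ (p₁ : ℝ) := by
    rw [hp₁, ← hsqrtm]
    exact round_ge' _
  have hr2 : ηp * b - 1/2 ≤ (p₂ : ℝ) := by
    rw [hp₂]; exact round_ge' _
  -- main real inequality
  have hK : 1 ≤ π * s / 4 - γp + ηp - π / 4 := by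
    nlinarith [Real.pi_gt_three, Real.pi_le_four, hγle, hηge, hs4,
      sq_nonneg (Real.sqrt 3 * 5 - 9), h3sq, h3nn]
  have hx_lt : (π / 2 - θ') / (2 * θ') < (p₁ : ℝ) + p₂ := by
    have hxle : (π / 2 - θ') / (2 * θ') ≤ π * b / 4 - 1/2 := by
      rw [div_le_iff₀ (by linarith : (0:ℝ) < 2 * θ')]
      nlinarith [mul_nonneg (by linarith : (0:ℝ) ≤ θ' * b - 1) Real.pi_pos.le]
    have hbK : 11 ≤ b * (π * s / 4 - γp + ηp - π / 4) := by
      nlinarith [hb11, hK]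
    nlinarith [hr1, hr2, hbK]
  -- integer step
  have hfloorZ : ⌊(π / 2 - θ') / (2 * θ')⌋ + 1 ≤ p₁ + p₂ := by
    have h1 : (⌊(π / 2 - θ') / (2 * θ')⌋ : ℝ) < ((p₁ + p₂ : ℤ) : ℝ) := by
      push_cast
      exact lt_of_le_of_lt (Int.floor_le _) hx_lt
    exact Int.add_one_le_iff.2 (by exact_mod_cast h1)
  have hfloorR : (⌊(π / 2 - θ') / (2 * θ')⌋ : ℝ) + 1 ≤ (p₁ : ℝ) + p₂ := by
    exact_mod_cast hfloorZ
  -- nonnegativity of p₁, p₂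
  have hsg : (0:ℝ) ≤ π / 4 * s - γp := by
    nlinarith [Real.pi_gt_three, hγle, h3sq, h3nn, sq_nonneg (Real.sqrt 3 * 5 - 9), hs4]
  have hp₁0 : 0 ≤ (p₁ : ℝ) := by
    nlinarith [hr1, hb11, hγle, hs4, Real.pi_gt_three, h3sq, h3nn,
      sq_nonneg (Real.sqrt 3 * 5 - 9),
      mul_nonneg hsg (by linarith : (0:ℝ) ≤ b - 11)]
  have hp₂0 : 0 ≤ (p₂ : ℝ) := by
    have h := mul_le_mul hηge hb11 (by norm_num) (by linarith [Real.pi_pos])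
    nlinarith [hr2, Real.pi_gt_three]
  -- final assembly
  have hmR : (p : ℝ) + 7 ≤ (m : ℝ) := by exact_mod_cast (by omega : p + 7 ≤ m)
  have hpR : (4 : ℝ) ≤ (p : ℝ) := by exact_mod_cast hp
  have hC : (0:ℝ) < 16 * ((m : ℝ) - p) - 10 := by linarith
  have h1 : ((⌊(π / 2 - θ') / (2 * θ')⌋ : ℝ) + 1) * (16 * ((m : ℝ) - p) - 10)
      ≤ ((p₁ : ℝ) + p₂) * (16 * ((m : ℝ) - p) - 10) :=
    mul_le_mul_of_nonneg_right hfloorR hC.le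
  nlinarith [h1, mul_nonneg hp₁0 (by linarith : (0:ℝ) ≤ (p:ℝ)),
    mul_nonneg hp₂0 (by linarith : (0:ℝ) ≤ (p:ℝ)), hmR]
end

section
/- For every natural number p ≥ 4, setting γ_p = (√(2^p)/2)·arctan(√(3·2^p − 4)/(2^p − 2)) and η_p = arcsin(√(2^p/(4·(2^p − 1)))), one has π/4 + (η_p − γ_p)/√(2^p) ≥ 0.699, and moreover π/4 + (η_p − γ_p)/√(2^p) − π/(4·√(2^p)) > 1/2. -/
open Real

private lemma sq_eq_sqrt_helper {a b : ℝ} (ha : 0 ≤ a) (hb : 0 ≤ b) (h : a ^ 2 = b ^ 2) :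
    a = b := by
  rw [← Real.sqrt_sq ha, ← Real.sqrt_sq hb, h]

private lemma arctan_le_self_aux {t : ℝ} (ht : 0 ≤ t) : Real.arctan t ≤ t := by
  have h0 : 0 ≤ Real.arctan t := by
    rw [← Real.arctan_zero]
    exact Real.arctan_strictMono.monotone ht
  calc Real.arctan t ≤ Real.tan (Real.arctan t) :=
        Real.le_tan h0 (Real.arctan_lt_pi_div_two t)
    _ = t := Real.tan_arctan t

private lemma le_arcsin_aux {a : ℝ} (h0 : 0 ≤ a) (h1 : a ≤ 1) : a ≤ Real.arcsin a := by
  have hs : Real.sin (Real.arcsin a) = a := Real.sin_arcsin (by linarith) h1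
  have h3 : 0 ≤ Real.arcsin a := Real.arcsin_nonneg.2 h0
  have := Real.sin_le h3
  linarith

private lemma arctan_le_of_le_tan {t c : ℝ} (hc0 : 0 ≤ c) (hc : c < π / 2)
    (h : t ≤ Real.tan c) : Real.arctan t ≤ c := by
  rw [← Real.arctan_tan (show -(π/2) < c by have := Real.pi_pos; linarith) hc]
  exact Real.arctan_strictMono.monotone h

set_option maxHeartbeats 1000000 in
/-- Numerical lower bounds used in the proof of Theorem 2 of the paper. -/
theorem stmt_16 (p : ℕ) (hp : 4 ≤ p) :
    (0.699 : ℝ) ≤ Real.pi / 4 +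
        (Real.arcsin (Real.sqrt ((2 : ℝ) ^ p / (4 * ((2 : ℝ) ^ p - 1)))) -
          Real.sqrt (2 ^ p) / 2 *
            Real.arctan (Real.sqrt (3 * (2 : ℝ) ^ p - 4) / ((2 : ℝ) ^ p - 2))) /
          Real.sqrt (2 ^ p) ∧
    (1 / 2 : ℝ) < Real.pi / 4 +
        (Real.arcsin (Real.sqrt ((2 : ℝ) ^ p / (4 * ((2 : ℝ) ^ p - 1)))) -
          Real.sqrt (2 ^ p) / 2 *
            Real.arctan (Real.sqrt (3 * (2 : ℝ) ^ p - 4) / ((2 : ℝ) ^ p - 2))) /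
          Real.sqrt (2 ^ p) -
        Real.pi / (4 * Real.sqrt (2 ^ p)) := by
  have hx16 : (16:ℝ) ≤ 2 ^ p := by
    calc (16:ℝ) = 2 ^ 4 := by norm_num
      _ ≤ 2 ^ p := pow_le_pow_right₀ (by norm_num) hp
  set x : ℝ := 2 ^ p with hxdef
  have hxpos : (0:ℝ) < x := by linarith
  set s : ℝ := Real.sqrt x with hsdef
  have hs2 : s ^ 2 = x := Real.sq_sqrt hxpos.le
  have hs0 : 0 < s := Real.sqrt_pos.2 hxpos
  set A := Real.arcsin (Real.sqrt (x / (4 * (x - 1)))) with hA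
  set B := Real.arctan (Real.sqrt (3 * x - 4) / (x - 2)) with hB
  have hrew : (A - s / 2 * B) / s = A / s - B / 2 := by
    rw [div_eq_iff hs0.ne', sub_mul, div_mul_cancel₀ _ hs0.ne']
    ring
  clear_value A B s x
  rw [hrew]
  have hx2' : (0:ℝ) < x - 2 := by linarith
  -- lower bound on A
  have hargl : (1/2:ℝ) ≤ Real.sqrt (x / (4 * (x - 1))) := by
    have h14 : Real.sqrt (1/4 : ℝ) = 1/2 := by
      rw [show (1/4:ℝ) = (1/2)^2 by norm_num, Real.sqrt_sq (by norm_num)]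
    rw [← h14]
    apply Real.sqrt_le_sqrt
    rw [le_div_iff₀ (by linarith)]
    linarith
  have hargu : Real.sqrt (x / (4 * (x - 1))) ≤ 1 :=
    Real.sqrt_le_one.mpr (by rw [div_le_one (by linarith)]; linarith)
  have hA1 : (1/2:ℝ) ≤ A := by
    rw [hA]
    exact le_trans hargl (le_arcsin_aux (by positivity) hargu)
  -- upper bound on B
  have hBb : B ≤ Real.sqrt (3*x-4) / (x-2) := by
    rw [hB]
    exact arctan_le_self_aux (by positivity)
  have hsq : Real.sqrt (3*x-4) ≤ 1.7321 * s := by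
    have h1 : (3*x - 4 : ℝ) ≤ (1.7321*s)^2 := by nlinarith [hs2]
    calc Real.sqrt (3*x-4) ≤ Real.sqrt ((1.7321*s)^2) := Real.sqrt_le_sqrt h1
      _ = 1.7321*s := Real.sqrt_sq (by positivity)
  have hπl := Real.pi_gt_d6
  have hπu := Real.pi_lt_d6
  rcases eq_or_lt_of_le hp with h4 | h5
  · -- case p = 4
    have hx : x = 16 := by rw [hxdef, ← h4]; norm_num
    have hs4 : s = 4 := by
      rw [hsdef, hx]
      apply sq_eq_sqrt_helper (Real.sqrt_nonneg _) (by norm_num)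
      rw [Real.sq_sqrt (by norm_num : (0:ℝ) ≤ 16)]
      norm_num
    rw [hx, show (16:ℝ)/(4*(16-1)) = 4/15 by norm_num] at hA
    rw [hx, show 3*(16:ℝ)-4 = 44 by norm_num, show (16:ℝ)-2 = 14 by norm_num] at hB
    rw [hs4]
    have hv0 : (0:ℝ) < Real.sqrt 11 := Real.sqrt_pos.2 (by norm_num)
    set v := Real.sqrt 11 with hvdef
    have hv2 : v^2 = 11 := Real.sq_sqrt (by norm_num)
    have hvv : v * v = 11 := by nlinarith
    have hvl : 3.31662 ≤ v := by nlinarith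
    have hvu : v ≤ 3.31663 := by nlinarith
    -- A = arctan (2/v)
    have hy1 : Real.sqrt (4/15 : ℝ) < 1 := by
      have := Real.sqrt_lt_sqrt (show (0:ℝ) ≤ 4/15 by norm_num)
        (show (4/15:ℝ) < 1 by norm_num)
      rwa [Real.sqrt_one] at this
    have hαeq : A = Real.arctan (2 / v) := by
      rw [hA, Real.arcsin_eq_arctan ⟨lt_of_lt_of_le (by norm_num) (Real.sqrt_nonneg _), hy1⟩]
      congr 1
      rw [Real.sq_sqrt (by norm_num : (0:ℝ) ≤ 4/15)]
      apply sq_eq_sqrt_helper (by positivity) (div_pos (by norm_num) hv0).le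
      rw [div_pow, div_pow, Real.sq_sqrt (by norm_num : (0:ℝ) ≤ 4/15),
        Real.sq_sqrt (by norm_num : (0:ℝ) ≤ 1 - 4/15), hv2]
      norm_num
    -- B = arctan (v/7)
    have hβeq : B = Real.arctan (v / 7) := by
      rw [hB]
      congr 1
      have h44 : Real.sqrt 44 = 2 * v := by
        apply sq_eq_sqrt_helper (Real.sqrt_nonneg _) (by positivity)
        rw [Real.sq_sqrt (by norm_num : (0:ℝ) ≤ 44)]
        linarith [hvv]
      rw [h44]
      ring
    -- arctan addition steps
    have hp1 : v/7 * (v/7) = 11/49 := by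
      rw [div_mul_div_comm, hvv]; norm_num
    have hC : Real.arctan (v/7) + Real.arctan (v/7) = Real.arctan (7*v/19) := by
      rw [Real.arctan_add (by rw [hp1]; norm_num)]
      congr 1
      rw [hp1]
      field_simp
      ring
    have hp2 : (7*v/19) * (-(2/v)) = -(14/19) := by
      field_simp
      ring
    have hnum : 7*v/19 + -(2/v) = 39/(19*v) := by
      field_simp
      linear_combination 7 * hvv
    have hD : Real.arctan (7*v/19) + Real.arctan (-(2/v)) = Real.arctan (13/(11*v)) := by
      rw [Real.arctan_add (by rw [hp2]; norm_num)]
      congr 1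
      rw [hp2, hnum]
      field_simp
      ring
    -- numeric bound on arctan (13/(11 v))
    have habs : |(0.34559:ℝ)| = 0.34559 := abs_of_nonneg (by norm_num)
    have hc1 : |(0.34559:ℝ)| ≤ 1 := by rw [habs]; norm_num
    have hsb := Real.sin_bound hc1
    have hcb := Real.cos_bound hc1
    rw [abs_le, habs] at hsb hcb
    norm_num at hsb hcb
    have hsl : (0.3379:ℝ) ≤ Real.sin 0.34559 := by linarith [hsb.1]
    have hcu : Real.cos 0.34559 ≤ 0.94103 := by linarith [hcb.2]
    have hcpos : 0 < Real.cos 0.34559 := Real.cos_pos_of_le_one hc1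
    have hE : Real.arctan (13/(11*v)) ≤ 0.34559 := by
      apply arctan_le_of_le_tan (by norm_num) (by linarith)
      rw [Real.tan_eq_sin_div_cos, div_le_div_iff₀ (by positivity) hcpos]
      nlinarith [mul_le_mul hsl hvl (by norm_num) (by linarith)]
    -- combine
    rw [Real.arctan_neg] at hD
    have hAB : -(0.34559:ℝ)/4 ≤ A/4 - B/2 := by
      rw [hαeq, hβeq]
      linarith [hC, hD, hE]
    constructor
    · linarith
    · linarith
  · -- case p ≥ 5
    have h5' : 5 ≤ p := h5
    have hx32 : (32:ℝ) ≤ x := by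
      rw [hxdef]
      calc (32:ℝ) = 2 ^ 5 := by norm_num
        _ ≤ 2 ^ p := pow_le_pow_right₀ (by norm_num) h5'
    have hs565 : (5.65:ℝ) ≤ s := by nlinarith [hs0.le]
    have hBu : B ≤ 1.85 / s := by
      refine hBb.trans ?_
      rw [div_le_div_iff₀ hx2' hs0]
      nlinarith [mul_le_mul_of_nonneg_right hsq hs0.le, hs2]
    have e1 : (0.5:ℝ)/s ≤ A/s := by
      gcongr
      linarith
    have e2 : B/2 ≤ 0.925/s := by
      have : (1.85:ℝ)/s/2 = 0.925/s := by ring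
      linarith [this]
    have e3 : (0.425:ℝ)/s ≤ 0.0753 := by
      rw [div_le_iff₀ hs0]
      linarith
    have e4 : (0.5:ℝ)/s - 0.925/s = -(0.425/s) := by ring
    have e5 : π/(4*s) ≤ 0.13901 := by
      rw [div_le_iff₀ (by positivity)]
      nlinarith
    have hkey : -(0.0753:ℝ) ≤ A/s - B/2 := by linarith
    constructor
    · linarith
    · linarith
end

section
/- For every real x > 2, one has √x·√(3x − 4) − 2·(x − 1)·arcsin(1/(2·√(1 − 1/x))) > 0. -/
open Real

/-- Inequality used in the proof of Theorem 2 of the paper. -/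
theorem stmt_17 (x : ℝ) (hx : 2 < x) :
    0 < Real.sqrt x * Real.sqrt (3 * x - 4) -
        2 * (x - 1) * Real.arcsin (1 / (2 * Real.sqrt (1 - 1 / x))) := by
  have hx0 : (0:ℝ) < x := by linarith
  have hx1 : (0:ℝ) < x - 1 := by linarith
  -- 1 - 1/x > 1/2
  have hhalf : (1:ℝ)/2 < 1 - 1/x := by
    have : 1/x < 1/2 := by
      rw [div_lt_div_iff₀ hx0 (by norm_num)]; linarith
    linarith
  have hs : Real.sqrt (1/2) < Real.sqrt (1 - 1/x) :=
    Real.sqrt_lt_sqrt (by norm_num) hhalf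
  have hs0 : 0 < Real.sqrt (1 - 1/x) := lt_trans (Real.sqrt_pos.2 (by norm_num)) hs
  -- the argument of arcsin is < √2/2
  have harg : 1 / (2 * Real.sqrt (1 - 1/x)) < Real.sqrt 2 / 2 := by
    have h2 : Real.sqrt (1/2) = 1 / Real.sqrt 2 := by
      rw [show (1:ℝ)/2 = 2⁻¹ by norm_num, Real.sqrt_inv, one_div]
    have hsqrt2 : (0:ℝ) < Real.sqrt 2 := Real.sqrt_pos.2 (by norm_num)
    rw [div_lt_div_iff₀ (by positivity) (by norm_num)]
    have : Real.sqrt 2 * Real.sqrt (1/2) = 1 := by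
      rw [← Real.sqrt_mul (by norm_num)]; norm_num
    nlinarith [mul_lt_mul_of_pos_left hs hsqrt2]
  -- arcsin < π/4
  have hpi4 : Real.arcsin (1 / (2 * Real.sqrt (1 - 1/x))) < π / 4 := by
    have hmem : π/4 ∈ Set.Ioc (-(π/2)) (π/2) := by
      constructor <;> nlinarith [Real.pi_pos]
    rw [Real.arcsin_lt_iff_lt_sin' hmem, Real.sin_pi_div_four]
    exact harg
  -- √x √(3x-4) = √(x(3x-4)) > (π/2)(x-1)
  have hprod : Real.sqrt x * Real.sqrt (3*x - 4) = Real.sqrt (x * (3*x - 4)) :=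
    (Real.sqrt_mul hx0.le _).symm
  have hkey : π/2 * (x - 1) < Real.sqrt (x * (3*x - 4)) := by
    rw [show (π/2 * (x-1)) = |π/2 * (x-1)| from
      (abs_of_nonneg (by positivity)).symm, ← Real.sqrt_sq_eq_abs]
    apply Real.sqrt_lt_sqrt (by positivity)
    have hπ2 : π^2 < 9.9225 := by nlinarith [Real.pi_lt_d2, Real.pi_pos]
    nlinarith [hπ2, sq_nonneg (x-2), mul_pos hx1 hx1]
  have h2 : 2 * (x - 1) * Real.arcsin (1 / (2 * Real.sqrt (1 - 1/x))) <
      2 * (x - 1) * (π/4) := by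
    apply mul_lt_mul_of_pos_left hpi4 (by linarith)
  calc (0:ℝ) < Real.sqrt (x * (3*x-4)) - π/2 * (x-1) := by linarith
    _ ≤ _ := by rw [hprod]; linarith
end
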